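/- arXiv:2008.12070 — 7 statements merged into one kernel-verified Lean document; each statement's English description precedes it below -/
import Mathlib

section
/- The L²-closure of {γ∘V : γ a bounded linear operator H→G} is contained in {γ∘V : γ linear (possibly unbounded) with γ∘V ∈ L²(P;G)}; that is, any L²(P;G)-limit of random variables of the form γₙ∘V with γₙ bounded linear equals γ∘V almost surely for some linear map γ:H→G with γ∘V square-integrable. -/
open MeasureTheory Filter Topology

/-- Any `L²(P;G)`-limit of random variables of the form `γₙ ∘ V` with
`γₙ : H → G` bounded linear equals `γ ∘ V` almost surely for some (possibly unbounded)
linear map `γ : H → G` with `γ ∘ V` square-integrable. -/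
theorem closure_boundedLinear_comp_subset_linear_comp
    {Ω : Type*} [MeasurableSpace Ω] (μ : Measure Ω) [IsProbabilityMeasure μ]
    {G H : Type*}
    [NormedAddCommGroup G] [InnerProductSpace ℝ G] [CompleteSpace G] [SecondCountableTopology G]
    [NormedAddCommGroup H] [InnerProductSpace ℝ H] [CompleteSpace H] [SecondCountableTopology H]
    (V : Lp H 2 μ) (W : Lp G 2 μ)
    (hW : W ∈ closure {f : Lp G 2 μ |
        ∃ A : H →L[ℝ] G, (f : Ω → G) =ᵐ[μ] fun ω => A (V ω)}) :
    ∃ γ : H →ₗ[ℝ] G, MemLp (fun ω => γ (V ω)) 2 μ ∧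
      (W : Ω → G) =ᵐ[μ] fun ω => γ (V ω) := by
  obtain ⟨u, hu_mem, hu_tendsto⟩ := mem_closure_iff_seq_limit.1 hW
  choose A hA using hu_mem
  have h_meas : TendstoInMeasure μ (fun n => (u n : Ω → G)) atTop W :=
    tendstoInMeasure_of_tendsto_Lp hu_tendsto
  obtain ⟨ns, _, h_ae⟩ := h_meas.exists_seq_tendsto_ae
  -- a.e. set where A (ns i) (V ω) → W ω
  have h_good : ∀ᵐ ω ∂μ, Tendsto (fun i => A (ns i) (V ω)) atTop (𝓝 (W ω)) := by
    have h_all : ∀ᵐ ω ∂μ, ∀ n, (u n : Ω → G) ω = A n (V ω) := ae_all_iff.2 hA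
    filter_upwards [h_ae, h_all] with ω hω h_eq
    simpa [h_eq] using hω
  -- subspace of points where the subsequence converges
  set S : Submodule ℝ H :=
    { carrier := {x | ∃ g : G, Tendsto (fun i => A (ns i) x) atTop (𝓝 g)}
      add_mem' := by
        rintro x y ⟨g1, h1⟩ ⟨g2, h2⟩
        exact ⟨g1 + g2, by simpa using h1.add h2⟩
      zero_mem' := ⟨0, by simp⟩
      smul_mem' := by
        rintro c x ⟨g, h⟩
        exact ⟨c • g, by simpa using h.const_smul c⟩ } with hS
  have hmem : ∀ x : S, ∃ g : G, Tendsto (fun i => A (ns i) (x : H)) atTop (𝓝 g) := fun x => x.2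
  choose g hg using hmem
  have gadd : ∀ x y : S, g (x + y) = g x + g y := by
    intro x y
    refine tendsto_nhds_unique (hg (x + y)) ?_
    simpa using (hg x).add (hg y)
  have gsmul : ∀ (c : ℝ) (x : S), g (c • x) = c • g x := by
    intro c x
    refine tendsto_nhds_unique (hg (c • x)) ?_
    simpa using (hg x).const_smul c
  let γ₀ : S →ₗ[ℝ] G := ⟨⟨g, fun x y => gadd x y⟩, fun c x => gsmul c x⟩
  obtain ⟨q, hq⟩ := Submodule.exists_isCompl S
  let γ : H →ₗ[ℝ] G := γ₀.comp (S.projectionOnto q hq)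
  have h_eq : (W : Ω → G) =ᵐ[μ] fun ω => γ (V ω) := by
    filter_upwards [h_good] with ω hω
    have hmemS : V ω ∈ S := ⟨W ω, hω⟩
    have hproj : (S.projectionOnto q hq) (V ω) = ⟨V ω, hmemS⟩ :=
      Submodule.projectionOnto_apply_left hq ⟨V ω, hmemS⟩
    have : γ (V ω) = g ⟨V ω, hmemS⟩ := by
      simp only [γ, LinearMap.comp_apply, hproj]; rfl
    rw [this]
    exact (tendsto_nhds_unique (hg ⟨V ω, hmemS⟩) hω).symm
  exact ⟨γ, (Lp.memLp W).ae_eq h_eq, h_eq⟩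
end

section
/- The linear conditional expectation is stable: if the conditional expectation E[U|V] lies in the L²-closure of affine transformations of V, then E^A[U|V] = E[U|V] almost surely. In particular, E^A[V|V] = V and E^A[φ∘V|V] = φ∘V a.s. for any bounded affine map φ. -/
open MeasureTheory

noncomputable section

variable {Ω : Type*} [MeasurableSpace Ω]

/-- The set of (classes of) bounded affine transformations `ω ↦ b + A (V ω)` of `V` in `L²`. -/
def affSet {H G : Type*} [NormedAddCommGroup H] [InnerProductSpace ℝ H]
    [NormedAddCommGroup G] [InnerProductSpace ℝ G]
    (μ : Measure Ω) (V : Lp H 2 μ) : Set (Lp G 2 μ) :=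
  {f | ∃ (b : G) (A : H →L[ℝ] G), (f : Ω → G) =ᵐ[μ] fun ω => b + A (V ω)}

/-- `IsLCE μ U UA V` : `UA` is the linear conditional expectation `E^A[U|V]`, i.e. the
orthogonal projection of `U` in `L²(P;G)` onto the `L²`-closure of the set of bounded affine
transformations of `V`. -/
def IsLCE {H G : Type*} [NormedAddCommGroup H] [InnerProductSpace ℝ H]
    [NormedAddCommGroup G] [InnerProductSpace ℝ G]
    (μ : Measure Ω) (U UA : Lp G 2 μ) (V : Lp H 2 μ) : Prop :=
  UA ∈ closure (affSet μ V) ∧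
  ∀ s ∈ closure (affSet μ V), @inner ℝ _ _ (U - UA) s = (0 : ℝ)

/-- The cross-covariance operator `Cov[X,Y] = E[(X−E X) ⊗ (Y−E Y)]` of `X` and `Y`,
as the map `f ↦ E[⟪Y − E Y, f⟫ • (X − E X)]`. -/
def cov {E F : Type*} [NormedAddCommGroup E] [InnerProductSpace ℝ E] [CompleteSpace E]
    [NormedAddCommGroup F] [InnerProductSpace ℝ F] [CompleteSpace F]
    (μ : Measure Ω) (X : Ω → E) (Y : Ω → F) : F → E :=
  fun f => ∫ ω, (@inner ℝ _ _ (Y ω - ∫ ω', Y ω' ∂μ) f) • (X ω - ∫ ω', X ω' ∂μ) ∂μ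

/-- `affSet` as a submodule. -/
def affSub {H G : Type*} [NormedAddCommGroup H] [InnerProductSpace ℝ H]
    [NormedAddCommGroup G] [InnerProductSpace ℝ G]
    (μ : Measure Ω) (V : Lp H 2 μ) : Submodule ℝ (Lp G 2 μ) where
  carrier := affSet μ V
  zero_mem' := ⟨0, 0, by simp; exact Lp.coeFn_zero G 2 μ⟩
  add_mem' := by
    rintro f g ⟨b1, A1, h1⟩ ⟨b2, A2, h2⟩
    exact ⟨b1 + b2, A1 + A2, by
      filter_upwards [Lp.coeFn_add f g, h1, h2] with ω hfg h1 h2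
      simp only [hfg, Pi.add_apply, h1, h2, ContinuousLinearMap.add_apply]; abel⟩
  smul_mem' := by
    rintro c f ⟨b1, A1, h1⟩
    exact ⟨c • b1, c • A1, by
      filter_upwards [Lp.coeFn_smul c f, h1] with ω hcf h1
      simp only [hcf, Pi.smul_apply, h1, smul_add, ContinuousLinearMap.smul_apply, ContinuousLinearMap.coe_smul']⟩

theorem closure_affSet_sub_mem {H G : Type*} [NormedAddCommGroup H] [InnerProductSpace ℝ H]
    [NormedAddCommGroup G] [InnerProductSpace ℝ G]
    (μ : Measure Ω) (V : Lp H 2 μ) {f g : Lp G 2 μ}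
    (hf : f ∈ closure (affSet μ V)) (hg : g ∈ closure (affSet μ V)) :
    f - g ∈ closure (affSet μ V) := by
  have h : affSet μ V = ((affSub μ V : Submodule ℝ (Lp G 2 μ)) : Set (Lp G 2 μ)) := rfl
  rw [h, ← Submodule.topologicalClosure_coe, SetLike.mem_coe] at hf hg ⊢
  exact sub_mem hf hg


theorem affSet_subset_meas {H G : Type*} [NormedAddCommGroup H] [InnerProductSpace ℝ H]
    [SecondCountableTopology H] [MeasurableSpace H] [BorelSpace H]
    [NormedAddCommGroup G] [InnerProductSpace ℝ G] [CompleteSpace G]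
    (μ : Measure Ω) (V : Lp H 2 μ) :
    closure (affSet μ V) ⊆
      {f : Lp G 2 μ | AEStronglyMeasurable[
        (MeasurableSpace.comap (V : Ω → H) ‹MeasurableSpace H›)] (f : Ω → G) μ} := by
  have hm : MeasurableSpace.comap (V : Ω → H) ‹MeasurableSpace H› ≤ _ :=
    (Lp.stronglyMeasurable V).measurable.comap_le
  set m := MeasurableSpace.comap (V : Ω → H) ‹MeasurableSpace H›
  refine closure_minimal ?_ (isClosed_aestronglyMeasurable hm)
  rintro f ⟨b, A, hf⟩
  have hVm : Measurable[m] (V : Ω → H) := Measurable.of_comap_le le_rfl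
  have hVsm : StronglyMeasurable[m] (V : Ω → H) := hVm.stronglyMeasurable
  exact ⟨fun ω => b + A ((V : Ω → H) ω),
    (A.continuous.comp_stronglyMeasurable hVsm).const_add b, hf⟩

theorem ortho_aux {H G : Type*} [NormedAddCommGroup H] [InnerProductSpace ℝ H]
    [SecondCountableTopology H] [MeasurableSpace H] [BorelSpace H]
    [NormedAddCommGroup G] [InnerProductSpace ℝ G] [CompleteSpace G]
    (μ : Measure Ω) [IsProbabilityMeasure μ] (U CE : Lp G 2 μ) (V : Lp H 2 μ)
    (hCE : (CE : Ω → G) =ᵐ[μ]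
      μ[(U : Ω → G) | MeasurableSpace.comap (V : Ω → H) ‹MeasurableSpace H›])
    {s : Lp G 2 μ}
    (hs : AEStronglyMeasurable[
        (MeasurableSpace.comap (V : Ω → H) ‹MeasurableSpace H›)] (s : Ω → G) μ) :
    @inner ℝ _ _ (U - CE) s = (0 : ℝ) := by
  have hm : MeasurableSpace.comap (V : Ω → H) ‹MeasurableSpace H› ≤ _ :=
    (Lp.stronglyMeasurable V).measurable.comap_le
  set m := MeasurableSpace.comap (V : Ω → H) ‹MeasurableSpace H›
  have hce2 : ((condExpL2 G ℝ hm U : Lp G 2 μ) : Ω → G) =ᵐ[μ] μ[(U : Ω → G) | m] := by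
    refine ae_eq_condExp_of_forall_setIntegral_eq hm ((Lp.memLp U).integrable one_le_two)
      (fun t ht hμt => integrableOn_condExpL2_of_measure_ne_top hm hμt.ne U)
      (fun t ht hμt => integral_condExpL2_eq hm U ht hμt.ne)
      (aestronglyMeasurable_condExpL2 hm U)
  have hCEeq : CE = (condExpL2 G ℝ hm U : Lp G 2 μ) :=
    Lp.ext (hCE.trans hce2.symm)
  rw [inner_sub_left, hCEeq, inner_condExpL2_eq_inner_fun hm U s hs, sub_self]


/-- Stability of the LCE: if the conditional expectation `E[U|σ(V)]` lies in the
`L²`-closure of affine transformations of `V`, then `E^A[U|V] = E[U|σ(V)]` a.s.; in particular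
`E^A[φ∘V|V] = φ∘V` a.s. for any bounded affine map `φ` (and so `E^A[V|V] = V`). -/
theorem lce_stability
    (μ : Measure Ω) [IsProbabilityMeasure μ]
    {F G H : Type*}
    [NormedAddCommGroup F] [InnerProductSpace ℝ F] [CompleteSpace F] [SecondCountableTopology F]
    [NormedAddCommGroup G] [InnerProductSpace ℝ G] [CompleteSpace G] [SecondCountableTopology G]
    [NormedAddCommGroup H] [InnerProductSpace ℝ H] [CompleteSpace H] [SecondCountableTopology H]
    [MeasurableSpace H] [BorelSpace H]
    (U UA : Lp G 2 μ) (V : Lp H 2 μ) (CE : Lp G 2 μ)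
    (hCE : (CE : Ω → G) =ᵐ[μ] μ[(U : Ω → G) | MeasurableSpace.comap (V : Ω → H) ‹MeasurableSpace H›])
    (hCEmem : CE ∈ closure (affSet μ V))
    (hUA : IsLCE μ U UA V)
    (b : F) (A : H →L[ℝ] F) (W WA : Lp F 2 μ)
    (hW : (W : Ω → F) =ᵐ[μ] fun ω => b + A (V ω))
    (hWA : IsLCE μ W WA V) :
    ((UA : Ω → G) =ᵐ[μ]
      μ[(U : Ω → G) | MeasurableSpace.comap (V : Ω → H) ‹MeasurableSpace H›]) ∧
    (WA : Ω → F) =ᵐ[μ] (W : Ω → F) := by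
  constructor
  · have hD : UA - CE ∈ closure (affSet μ V) :=
      closure_affSet_sub_mem μ V hUA.1 hCEmem
    have h1 : @inner ℝ _ _ (U - UA) (UA - CE) = (0 : ℝ) := hUA.2 _ hD
    have h2 : @inner ℝ _ _ (U - CE) (UA - CE) = (0 : ℝ) :=
      ortho_aux μ U CE V hCE (affSet_subset_meas μ V hD)
    have h3 : @inner ℝ _ _ (UA - CE) (UA - CE) = (0 : ℝ) := by
      have he : UA - CE = (U - CE) - (U - UA) := by abel
      nth_rewrite 1 [he]
      rw [inner_sub_left, h1, h2, sub_zero]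
    have h4 : UA = CE := sub_eq_zero.mp (inner_self_eq_zero.mp h3)
    rw [h4]
    exact hCE
  · have hWmem : W ∈ closure (affSet μ V) := subset_closure ⟨b, A, hW⟩
    have hD : W - WA ∈ closure (affSet μ V) :=
      closure_affSet_sub_mem μ V hWmem hWA.1
    have h3 : @inner ℝ _ _ (W - WA) (W - WA) = (0 : ℝ) := hWA.2 _ hD
    have h4 : W = WA := sub_eq_zero.mp (inner_self_eq_zero.mp h3)
    rw [h4]

end
end

section
/- Tower property through a coarser variable: if σ(W) ⊆ σ(V), then E^A[E[U|V] | W] = E^A[U|W] almost surely. -/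
open MeasureTheory

noncomputable section

variable {Ω : Type*} [MeasurableSpace Ω]

/-- Tower property through a coarser variable: if `σ(W) ⊆ σ(V)` then
`E^A[E[U|V] | W] = E^A[U|W]` a.s. -/
theorem lce_tower_coarser
    (μ : Measure Ω) [IsProbabilityMeasure μ]
    {F G H : Type*}
    [NormedAddCommGroup F] [InnerProductSpace ℝ F] [CompleteSpace F] [SecondCountableTopology F]
    [NormedAddCommGroup G] [InnerProductSpace ℝ G] [CompleteSpace G] [SecondCountableTopology G]
    [NormedAddCommGroup H] [InnerProductSpace ℝ H] [CompleteSpace H] [SecondCountableTopology H]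
    [MeasurableSpace H] [BorelSpace H] [MeasurableSpace F] [BorelSpace F]
    (U : Lp G 2 μ) (V : Lp H 2 μ) (W : Lp F 2 μ)
    (hsub : MeasurableSpace.comap (W : Ω → F) ‹MeasurableSpace F› ≤
            MeasurableSpace.comap (V : Ω → H) ‹MeasurableSpace H›)
    (CE Z UW : Lp G 2 μ)
    (hCE : (CE : Ω → G) =ᵐ[μ]
      μ[(U : Ω → G) | MeasurableSpace.comap (V : Ω → H) ‹MeasurableSpace H›])
    (hZ : IsLCE μ CE Z W)
    (hUW : IsLCE μ U UW W) :
    (Z : Ω → G) =ᵐ[μ] (UW : Ω → G) := by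
  classical
  have hmV : MeasurableSpace.comap (V : Ω → H) ‹MeasurableSpace H› ≤ ‹MeasurableSpace Ω› :=
    measurable_iff_comap_le.mp (Lp.stronglyMeasurable V).measurable
  haveI : SigmaFinite (μ.trim hmV) := by infer_instance
  -- the L² conditional expectation
  have hPcond : ((condExpL2 G ℝ hmV U : Lp G 2 μ) : Ω → G) =ᵐ[μ]
      μ[(U : Ω → G) | MeasurableSpace.comap (V : Ω → H) ‹MeasurableSpace H›] := by
    refine ae_eq_condExp_of_forall_setIntegral_eq hmV
      (MemLp.integrable one_le_two (Lp.memLp U)) ?_ ?_ ?_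
    · intro s hs hμs
      exact integrableOn_condExpL2_of_measure_ne_top hmV hμs.ne U
    · intro s hs hμs
      exact integral_condExpL2_eq hmV U hs hμs.ne
    · exact aestronglyMeasurable_condExpL2 hmV U
  have hCEP : CE = (condExpL2 G ℝ hmV U : Lp G 2 μ) := by
    apply Lp.ext (p := (2 : ENNReal)) (μ := μ)
    exact hCE.trans hPcond.symm
  -- elements of affSet μ W are mV-a.e.-strongly-measurable
  have haff_meas : ∀ s ∈ affSet (G := G) μ W,
      AEStronglyMeasurable[MeasurableSpace.comap (V : Ω → H) ‹MeasurableSpace H›]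
        (s : Ω → G) μ := by
    rintro s ⟨b, A, hs⟩
    borelize G
    have hWm : Measurable[MeasurableSpace.comap (W : Ω → F) ‹MeasurableSpace F›] (W : Ω → F) :=
      measurable_iff_comap_le.mpr le_rfl
    have hWmV : Measurable[MeasurableSpace.comap (V : Ω → H) ‹MeasurableSpace H›] (W : Ω → F) :=
      hWm.mono hsub le_rfl
    have hmeas : Measurable[MeasurableSpace.comap (V : Ω → H) ‹MeasurableSpace H›]
        (fun ω => b + A (W ω)) :=
      measurable_const.add (A.continuous.measurable.comp hWmV)
    exact ⟨fun ω => b + A (W ω), hmeas.stronglyMeasurable, hs⟩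
  -- U - CE is orthogonal to every element of affSet μ W
  have hkey : ∀ s ∈ affSet (G := G) μ W, @inner ℝ _ _ (U - CE) s = (0 : ℝ) := by
    intro s hs
    rw [hCEP, inner_sub_left]
    rw [inner_condExpL2_eq_inner_fun hmV U s (haff_meas s hs)]
    ring
  -- extend to the closure by continuity
  have hkey' : ∀ s ∈ closure (affSet (G := G) μ W), @inner ℝ _ _ (U - CE) s = (0 : ℝ) := by
    intro s hs
    have hcont : Continuous (fun t : Lp G 2 μ => @inner ℝ _ _ (U - CE) t) :=
      continuous_const.inner continuous_id
    have hmaps : Set.MapsTo (fun t : Lp G 2 μ => @inner ℝ _ _ (U - CE) t)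
        (affSet (G := G) μ W) ({0} : Set ℝ) := fun t ht => hkey t ht
    have := map_mem_closure hcont hs hmaps
    simpa using this
  -- Z - UW belongs to the closure of affSet μ W
  have hsub_mem : ∀ a ∈ affSet (G := G) μ W, ∀ b ∈ affSet (G := G) μ W,
      a - b ∈ affSet (G := G) μ W := by
    rintro a ⟨b1, A1, ha⟩ c ⟨b2, A2, hc⟩
    refine ⟨b1 - b2, A1 - A2, ?_⟩
    filter_upwards [ha, hc, Lp.coeFn_sub a c] with ω h1 h2 h3
    rw [h3, Pi.sub_apply, h1, h2]
    simp only [ContinuousLinearMap.sub_apply]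
    abel
  have hZUW : Z - UW ∈ closure (affSet (G := G) μ W) :=
    map_mem_closure₂ continuous_sub hZ.1 hUW.1 hsub_mem
  -- inner products vanish
  have h1 : @inner ℝ _ _ (CE - Z) (Z - UW) = (0 : ℝ) := hZ.2 _ hZUW
  have h2 : @inner ℝ _ _ (U - UW) (Z - UW) = (0 : ℝ) := hUW.2 _ hZUW
  have h3 : @inner ℝ _ _ (U - CE) (Z - UW) = (0 : ℝ) := hkey' _ hZUW
  have e1 : @inner ℝ _ _ (Z - CE) (Z - UW) = (0 : ℝ) := by
    have h : (Z - CE : Lp G 2 μ) = -(CE - Z) := by abel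
    rw [h, inner_neg_left, h1, neg_zero]
  have e2 : @inner ℝ _ _ (CE - U) (Z - UW) = (0 : ℝ) := by
    have h : (CE - U : Lp G 2 μ) = -(U - CE) := by abel
    rw [h, inner_neg_left, h3, neg_zero]
  have hself : @inner ℝ _ _ (Z - UW) (Z - UW) = (0 : ℝ) := by
    have hdecomp : (Z - UW : Lp G 2 μ) = (Z - CE) + (CE - U) + (U - UW) := by abel
    nth_rewrite 1 [hdecomp]
    rw [inner_add_left, inner_add_left, e1, e2, h2]
    ring
  have hZeq : Z = UW := sub_eq_zero.mp (inner_self_eq_zero (𝕜 := ℝ) (x := Z - UW) |>.mp hself)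
  rw [hZeq]

end
end

section
/- Idempotence tower property: E^A[U | E^A[U|V]] = E^A[U|V] almost surely. -/
open MeasureTheory

noncomputable section

variable {Ω : Type*} [MeasurableSpace Ω]

/-- Idempotence tower property: `E^A[U | E^A[U|V]] = E^A[U|V]` a.s. -/
theorem lce_idempotent_tower
    (μ : Measure Ω) [IsProbabilityMeasure μ]
    {G H : Type*}
    [NormedAddCommGroup G] [InnerProductSpace ℝ G] [CompleteSpace G] [SecondCountableTopology G]
    [NormedAddCommGroup H] [InnerProductSpace ℝ H] [CompleteSpace H] [SecondCountableTopology H]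
    (U UA Z : Lp G 2 μ) (V : Lp H 2 μ)
    (hUA : IsLCE μ U UA V)
    (hZ : IsLCE μ U Z UA) :
    (Z : Ω → G) =ᵐ[μ] (UA : Ω → G) := by
  -- UA is itself an affine function of UA
  have hmem : UA ∈ closure (affSet μ UA) := by
    apply subset_closure
    exact ⟨0, ContinuousLinearMap.id ℝ G, Filter.Eventually.of_forall fun ω => by simp⟩
  -- closure (affSet μ UA) ⊆ closure (affSet μ V)
  have hsub : closure (affSet (G := G) μ UA) ⊆ closure (affSet μ V) := by
    refine closure_minimal (fun s hs => ?_) isClosed_closure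
    obtain ⟨b, A, hba⟩ := hs
    -- s = Φ UA where Φ f = const b + A ∘ f, and Φ maps affSet μ V into itself
    set c : Lp G 2 μ := MemLp.toLp (fun _ => b) (memLp_const b) with hc
    set Φ : Lp G 2 μ → Lp G 2 μ := fun f => c + (A.compLpL 2 μ) f with hΦ
    have hcc : (c : Ω → G) =ᵐ[μ] fun _ => b := MemLp.coeFn_toLp _
    have hΦcont : Continuous Φ := by
      exact continuous_const.add (A.compLpL 2 μ).continuous
    have hs_eq : s = Φ UA := by
      apply Lp.ext (p := 2) (μ := μ)
      have h1 : ((Φ UA : Lp G 2 μ) : Ω → G) =ᵐ[μ] fun ω => b + A (UA ω) := by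
        filter_upwards [Lp.coeFn_add c ((A.compLpL 2 μ) UA), hcc,
          ContinuousLinearMap.coeFn_compLpL (p := 2) (μ := μ) A UA] with ω h h' h''
        rw [show Φ UA = c + (A.compLpL 2 μ) UA from rfl, h]
        simp [h', h'']
      exact hba.trans h1.symm
    rw [hs_eq]
    refine map_mem_closure hΦcont hUA.1 ?_
    intro f hf
    obtain ⟨b', A', hf'⟩ := hf
    refine ⟨b + A b', A.comp A', ?_⟩
    filter_upwards [Lp.coeFn_add c ((A.compLpL 2 μ) f), hcc,
      ContinuousLinearMap.coeFn_compLpL (p := 2) (μ := μ) A f, hf'] with ω h h' h'' h'''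
    show (Φ f : Ω → G) ω = _
    rw [show Φ f = c + (A.compLpL 2 μ) f from rfl, h]
    simp [h', h'', h''', add_assoc]
  -- orthogonality relations
  have h1 : @inner ℝ _ _ (U - UA) Z = (0 : ℝ) := hUA.2 Z (hsub hZ.1)
  have h2 : @inner ℝ _ _ (U - UA) UA = (0 : ℝ) := hUA.2 UA hUA.1
  have h3 : @inner ℝ _ _ (U - Z) Z = (0 : ℝ) := hZ.2 Z hZ.1
  have h4 : @inner ℝ _ _ (U - Z) UA = (0 : ℝ) := hZ.2 UA hmem
  have key : @inner ℝ _ _ (Z - UA) (Z - UA) = (0 : ℝ) := by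
    have hZUA : Z - UA = (U - UA) - (U - Z) := by abel
    have e : @inner ℝ _ _ ((U - UA) - (U - Z)) (Z - UA) = (0 : ℝ) := by
      rw [inner_sub_left, inner_sub_right, inner_sub_right, h1, h2, h3, h4]; ring
    rw [← hZUA] at e
    exact e
  have : Z - UA = 0 := inner_self_eq_zero.mp key
  have hZeq : Z = UA := sub_eq_zero.mp this
  rw [hZeq]

end
end

section
/- If ran C_{VU} ⊆ ran C_V, then C_V† C_{VU} : G → H is a well-defined bounded operator, and the affine map γ(v) := μ_U + (C_V† C_{VU})* (v − μ_V) satisfies: γ∘V is the orthogonal projection of U onto the L²-closure of affine transformations of V, i.e., E^A[U|V] = γ∘V almost surely. -/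
open MeasureTheory

noncomputable section

variable {Ω : Type*} [MeasurableSpace Ω]

section Aux

open Filter Topology

variable {μ : Measure Ω} [IsProbabilityMeasure μ]
variable {H : Type*} [NormedAddCommGroup H] [InnerProductSpace ℝ H] [CompleteSpace H]
variable {G : Type*} [NormedAddCommGroup G] [InnerProductSpace ℝ G] [CompleteSpace G]

set_option linter.unusedSectionVars false

lemma aux_integrable_inner {X Y : Ω → H} (hX : MemLp X 2 μ) (hY : MemLp Y 2 μ) :
    Integrable (fun ω => (inner ℝ (X ω) (Y ω) : ℝ)) μ := by
  have h := L2.integrable_inner (𝕜 := ℝ) (hX.toLp X) (hY.toLp Y)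
  refine h.congr ?_
  filter_upwards [hX.coeFn_toLp, hY.coeFn_toLp] with ω h1 h2
  rw [h1, h2]

lemma aux_integrable_mul {f g : Ω → ℝ} (hf : MemLp f 2 μ) (hg : MemLp g 2 μ) :
    Integrable (fun ω => f ω * g ω) μ := by
  simpa [RCLike.inner_apply, conj_trivial, mul_comm] using aux_integrable_inner (H := ℝ) hf hg

lemma aux_memLp_inner_const {X : Ω → H} (hX : MemLp X 2 μ) (a : H) :
    MemLp (fun ω => (inner ℝ (X ω) a : ℝ)) 2 μ := by
  simpa [real_inner_comm] using hX.const_inner a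

/-- Key interchange lemma: if the scalar components of `X` and `Y` are uncorrelated in all
directions, then `E ⟪X, Y⟫ = 0`. -/
lemma aux_key [SecondCountableTopology H]
    {X Y : Ω → H} (hX : MemLp X 2 μ) (hY : MemLp Y 2 μ)
    (h : ∀ a c : H, ∫ ω, (inner ℝ (X ω) a : ℝ) * (inner ℝ (Y ω) c : ℝ) ∂μ = 0) :
    ∫ ω, (inner ℝ (X ω) (Y ω) : ℝ) ∂μ = 0 := by
  obtain ⟨w, b, hb⟩ := exists_hilbertBasis ℝ H
  have hon : Orthonormal ℝ (⇑b) := b.orthonormal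
  haveI : Countable w := by
    refine Pairwise.countable_of_isOpen_disjoint
      (s := fun i : w => Metric.ball (i : H) (1/2)) ?_ (fun i => Metric.isOpen_ball)
      (fun i => Metric.nonempty_ball.2 (by norm_num))
    intro i j hij
    refine Metric.ball_disjoint_ball ?_
    rw [dist_eq_norm]
    have h0 : (inner ℝ (i : H) (j : H) : ℝ) = 0 := by
      have := hon.2 (i := i) (j := j) hij
      rwa [hb] at this
    have h1 : ‖(i : H)‖ = 1 := by
      have := hon.1 i; rwa [hb] at this
    have h2 : ‖(j : H)‖ = 1 := by
      have := hon.1 j; rwa [hb] at this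
    have h3 : ‖(i : H) - (j : H)‖ ^ 2 = 2 := by
      rw [norm_sub_sq_real, h0, h1, h2]; ring
    nlinarith [norm_nonneg ((i : H) - (j : H))]
  obtain ⟨t, ht⟩ := Filter.exists_seq_tendsto (Filter.atTop : Filter (Finset w))
  set F : ℕ → Ω → ℝ := fun n ω =>
    ∑ i ∈ t n, (inner ℝ (X ω) (b i) : ℝ) * (inner ℝ (Y ω) (b i) : ℝ) with hF
  have hterm : ∀ (i : w), Integrable
      (fun ω => (inner ℝ (X ω) (b i) : ℝ) * (inner ℝ (Y ω) (b i) : ℝ)) μ :=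
    fun i => aux_integrable_mul (aux_memLp_inner_const hX _) (aux_memLp_inner_const hY _)
  have hFint : ∀ n, Integrable (F n) μ :=
    fun n => integrable_finset_sum _ (fun i _ => hterm i)
  have hFzero : ∀ n, ∫ ω, F n ω ∂μ = 0 := by
    intro n
    rw [hF]
    rw [integral_finset_sum _ (fun i _ => hterm i)]
    exact Finset.sum_eq_zero fun i _ => h _ _
  have hbound : Integrable (fun ω => ‖X ω‖ * ‖Y ω‖) μ := aux_integrable_mul hX.norm hY.norm
  have hdom : ∀ n, ∀ᵐ ω ∂μ, ‖F n ω‖ ≤ ‖X ω‖ * ‖Y ω‖ := by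
    intro n
    filter_upwards with ω
    have h1 := Finset.sum_mul_sq_le_sq_mul_sq (t n)
      (fun i => (inner ℝ (X ω) (b i) : ℝ)) (fun i => (inner ℝ (Y ω) (b i) : ℝ))
    have h2 : ∑ i ∈ t n, (inner ℝ (X ω) (b i) : ℝ) ^ 2 ≤ ‖X ω‖ ^ 2 := by
      have := hon.sum_inner_products_le (X ω) (s := t n)
      simpa [sq_abs, real_inner_comm] using this
    have h3 : ∑ i ∈ t n, (inner ℝ (Y ω) (b i) : ℝ) ^ 2 ≤ ‖Y ω‖ ^ 2 := by
      have := hon.sum_inner_products_le (Y ω) (s := t n)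
      simpa [sq_abs, real_inner_comm] using this
    have h4 : (0:ℝ) ≤ ∑ i ∈ t n, (inner ℝ (X ω) (b i) : ℝ) ^ 2 :=
      Finset.sum_nonneg fun i _ => sq_nonneg _
    have h5 : (0:ℝ) ≤ ∑ i ∈ t n, (inner ℝ (Y ω) (b i) : ℝ) ^ 2 :=
      Finset.sum_nonneg fun i _ => sq_nonneg _
    have habs : |F n ω| ≤ ‖X ω‖ * ‖Y ω‖ := by
      nlinarith [abs_nonneg (F n ω), sq_abs (F n ω), norm_nonneg (X ω), norm_nonneg (Y ω),
        mul_nonneg (norm_nonneg (X ω)) (norm_nonneg (Y ω))]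
    simpa using habs
  have hlim : ∀ᵐ ω ∂μ, Tendsto (fun n => F n ω) atTop (𝓝 (inner ℝ (X ω) (Y ω) : ℝ)) := by
    filter_upwards with ω
    have hs : Tendsto
        (fun s : Finset w => ∑ i ∈ s, (inner ℝ (X ω) (b i) : ℝ) * (inner ℝ (b i) (Y ω) : ℝ))
        atTop (𝓝 (inner ℝ (X ω) (Y ω) : ℝ)) := b.hasSum_inner_mul_inner (X ω) (Y ω)
    have := hs.comp ht
    simpa [hF, Function.comp_def, real_inner_comm] using this
  have hmain := tendsto_integral_of_dominated_convergence _
    (fun n => (hFint n).aestronglyMeasurable) hbound hdom hlim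
  simp only [hFzero] at hmain
  exact (tendsto_nhds_unique hmain tendsto_const_nhds)

/-- Existence and uniqueness of the pseudo-inverse composition `Q = C_V† C_{VU}`. -/
lemma aux_Q (CV : H →L[ℝ] H) (CVU : G →L[ℝ] H)
    (hrange : Set.range CVU ⊆ Set.range CV) :
    ∃! Q : G →L[ℝ] H,
      CV.comp Q = CVU ∧ ∀ g : G, Q g ∈ (LinearMap.ker (CV : H →ₗ[ℝ] H))ᗮ := by
  classical
  set K : Submodule ℝ H := LinearMap.ker (CV : H →ₗ[ℝ] H) with hK
  haveI : CompleteSpace K := (ContinuousLinearMap.isClosed_ker CV).completeSpace_coe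
  have hker : ∀ g : G, ∃ y, CV y = CVU g := fun g => hrange ⟨g, rfl⟩
  have hinj : ∀ y ∈ Kᗮ, CV y = 0 → y = 0 := by
    intro y hy h0
    have hyK : y ∈ K := by simpa [hK, LinearMap.mem_ker] using h0
    have := (Submodule.mem_orthogonal K y).1 hy y hyK
    exact inner_self_eq_zero.1 this
  have hinj' : ∀ y z, y ∈ Kᗮ → z ∈ Kᗮ → CV y = CV z → y = z := by
    intro y z hy hz hyz
    have := hinj (y - z) (Submodule.sub_mem _ hy hz) (by rw [map_sub, hyz, sub_self])
    exact sub_eq_zero.1 this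
  set Q0 : G → H := fun g => (Kᗮ.orthogonalProjectionOnto (Classical.choose (hker g)) : H) with hQ0
  have hQ0mem : ∀ g, Q0 g ∈ Kᗮ := fun g => SetLike.coe_mem _
  have hQ0CV : ∀ g, CV (Q0 g) = CVU g := by
    intro g
    have h1 : Classical.choose (hker g) - Q0 g ∈ Kᗮᗮ :=
      Submodule.sub_starProjection_mem_orthogonal (K := Kᗮ) (Classical.choose (hker g))
    rw [Submodule.orthogonal_orthogonal] at h1
    have h2 : CV (Classical.choose (hker g)) - CV (Q0 g) = 0 := by
      have h2' : CV (Classical.choose (hker g) - Q0 g) = 0 := h1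
      rwa [map_sub] at h2'
    have h3 : CV (Classical.choose (hker g)) = CVU g := Classical.choose_spec (hker g)
    rw [← h3]
    exact (sub_eq_zero.1 h2).symm
  have hadd : ∀ g g', Q0 (g + g') = Q0 g + Q0 g' := by
    intro g g'
    refine hinj' _ _ (hQ0mem _) (Submodule.add_mem _ (hQ0mem g) (hQ0mem g')) ?_
    rw [map_add, hQ0CV, hQ0CV, hQ0CV, map_add]
  have hsmul : ∀ (c : ℝ) (g), Q0 (c • g) = c • Q0 g := by
    intro c g
    refine hinj' _ _ (hQ0mem _) (Submodule.smul_mem _ c (hQ0mem g)) ?_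
    rw [_root_.map_smul, hQ0CV, hQ0CV, _root_.map_smul]
  set Qlin : G →ₗ[ℝ] H :=
    { toFun := Q0, map_add' := hadd, map_smul' := hsmul } with hQlin
  have hcont : Continuous Qlin := by
    refine Qlin.continuous_of_seq_closed_graph ?_
    intro u x y hux huy
    have hy : y ∈ Kᗮ := by
      have hcl : IsClosed (Kᗮ : Set H) := K.isClosed_orthogonal
      exact hcl.mem_of_tendsto huy (Eventually.of_forall fun n => hQ0mem (u n))
    have h1 : Tendsto (fun n => CV (Qlin (u n))) atTop (𝓝 (CV y)) :=
      (CV.continuous.tendsto y).comp huy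
    have h2 : Tendsto (fun n => CVU (u n)) atTop (𝓝 (CVU x)) :=
      (CVU.continuous.tendsto x).comp hux
    have h3 : (fun n => CV (Qlin (u n))) = fun n => CVU (u n) :=
      funext fun n => hQ0CV (u n)
    rw [h3] at h1
    have h4 : CV y = CVU x := tendsto_nhds_unique h1 h2
    refine hinj' _ _ hy (hQ0mem x) ?_
    show CV y = CV (Q0 x)
    rw [h4, hQ0CV]
  set Q : G →L[ℝ] H := ⟨Qlin, hcont⟩ with hQdef
  refine ⟨Q, ⟨?_, fun g => hQ0mem g⟩, ?_⟩
  · ext g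
    exact hQ0CV g
  · rintro Q' ⟨hQ'1, hQ'2⟩
    ext g
    refine hinj' _ _ (hQ'2 g) (hQ0mem g) ?_
    show CV (Q' g) = CV (Q0 g)
    rw [hQ0CV]
    exact congrFun (congrArg (fun (f : G →L[ℝ] H) => ⇑f) hQ'1) g

/-- Covariance pairing identity. -/
lemma aux_cov_pairing (X : Ω → G) (Y : Ω → H) (hX : MemLp X 2 μ) (hY : MemLp Y 2 μ)
    (g : G) (c : H) (T : H)
    (hT : T = ∫ ω, (inner ℝ (X ω) g : ℝ) • (Y ω) ∂μ) :
    ∫ ω, (inner ℝ (X ω) g : ℝ) * (inner ℝ (Y ω) c : ℝ) ∂μ = inner ℝ T c := by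
  have hφ : MemLp (fun ω => (inner ℝ (X ω) g : ℝ)) 2 μ := by
    simpa [real_inner_comm] using hX.const_inner g
  have hint : Integrable (fun ω => (inner ℝ (X ω) g : ℝ) • (Y ω)) μ := by
    have := (hY.smul hφ (r := 1)).integrable le_rfl
    exact this
  have h2 := integral_inner (𝕜 := ℝ) hint c
  rw [hT, real_inner_comm]
  rw [← h2]
  congr 1
  ext ω
  rw [real_inner_smul_right, real_inner_comm (Y ω) c]

end Aux

/-- Formula for the LCE in the compatible case: if `ran C_{VU} ⊆ ran C_V`,
then `Q := C_V† C_{VU} : G → H` is a well-defined bounded operator (the unique bounded operator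
with `C_V Q = C_{VU}` and range in `(ker C_V)ᗮ`), and the affine map
`γ(v) = μ_U + Q*(v − μ_V)` satisfies `E^A[U|V] = γ ∘ V` almost surely. -/
theorem lce_formula_compatible_case
    (μ : Measure Ω) [IsProbabilityMeasure μ]
    {G H : Type*}
    [NormedAddCommGroup G] [InnerProductSpace ℝ G] [CompleteSpace G] [SecondCountableTopology G]
    [NormedAddCommGroup H] [InnerProductSpace ℝ H] [CompleteSpace H] [SecondCountableTopology H]
    (U : Lp G 2 μ) (V : Lp H 2 μ)
    (CV : H →L[ℝ] H) (CVU : G →L[ℝ] H)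
    (hCV : ∀ h : H, CV h =
      ∫ ω, (@inner ℝ _ _ (V ω - ∫ ω', V ω' ∂μ) h) • (V ω - ∫ ω', V ω' ∂μ) ∂μ)
    (hCVU : ∀ g : G, CVU g =
      ∫ ω, (@inner ℝ _ _ (U ω - ∫ ω', U ω' ∂μ) g) • (V ω - ∫ ω', V ω' ∂μ) ∂μ)
    (hrange : Set.range CVU ⊆ Set.range CV) :
    (∃! Q : G →L[ℝ] H,
      CV.comp Q = CVU ∧ ∀ g : G, Q g ∈ (LinearMap.ker (CV : H →ₗ[ℝ] H))ᗮ) ∧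
    (∀ Q : G →L[ℝ] H,
      (CV.comp Q = CVU ∧ ∀ g : G, Q g ∈ (LinearMap.ker (CV : H →ₗ[ℝ] H))ᗮ) →
      ∀ UA : Lp G 2 μ,
        ((UA : Ω → G) =ᵐ[μ] fun ω =>
          (∫ ω', U ω' ∂μ) +
            (ContinuousLinearMap.adjoint Q) (V ω - ∫ ω', V ω' ∂μ)) →
        IsLCE μ U UA V) := by
  classical
  refine ⟨aux_Q CV CVU hrange, ?_⟩
  rintro Q ⟨hQcomp, hQperp⟩ UA hUA
  set mU : G := ∫ ω', U ω' ∂μ with hmU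
  set mV : H := ∫ ω', V ω' ∂μ with hmV
  set Qa : H →L[ℝ] G := ContinuousLinearMap.adjoint Q with hQa
  -- basic MemLp / integrability facts
  have hUm : MemLp (fun ω => U ω - mU) 2 μ := (Lp.memLp U).sub (memLp_const mU)
  have hVm : MemLp (fun ω => V ω - mV) 2 μ := (Lp.memLp V).sub (memLp_const mV)
  have hQaV : MemLp (fun ω => Qa (V ω - mV)) 2 μ := by
    simpa [Function.comp_def] using Qa.comp_memLp' hVm
  have hWm : MemLp (fun ω => (U ω - mU) - Qa (V ω - mV)) 2 μ := hUm.sub hQaV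
  have hUInt : Integrable (fun ω => U ω) μ := (Lp.memLp U).integrable one_le_two
  have hVInt : Integrable (fun ω => V ω) μ := (Lp.memLp V).integrable one_le_two
  have hUmInt : Integrable (fun ω => U ω - mU) μ := hUm.integrable one_le_two
  have hVmInt : Integrable (fun ω => V ω - mV) μ := hVm.integrable one_le_two
  have hWInt : Integrable (fun ω => (U ω - mU) - Qa (V ω - mV)) μ :=
    hWm.integrable one_le_two
  -- mean-zero facts
  have hUmZero : ∫ ω, (U ω - mU) ∂μ = 0 := by
    rw [integral_sub hUInt (integrable_const mU), integral_const]
    simp [hmU]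
  have hVmZero : ∫ ω, (V ω - mV) ∂μ = 0 := by
    rw [integral_sub hVInt (integrable_const mV), integral_const]
    simp [hmV]
  have hWZero : ∫ ω, ((U ω - mU) - Qa (V ω - mV)) ∂μ = 0 := by
    rw [integral_sub hUmInt (hQaV.integrable one_le_two)]
    rw [show (fun ω => Qa (V ω - mV)) = fun ω => Qa ((fun ω' => V ω' - mV) ω) from rfl]
    rw [ContinuousLinearMap.integral_comp_comm Qa hVmInt, hVmZero, hUmZero]
    simp
  -- covariance pairings
  have hcovU : ∀ (g : G) (c : H),
      ∫ ω, (inner ℝ (U ω - mU) g : ℝ) * (inner ℝ (V ω - mV) c : ℝ) ∂μ = inner ℝ (CVU g) c :=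
    fun g c => aux_cov_pairing _ _ hUm hVm g c _ (hCVU g)
  have hcovV : ∀ (b c : H),
      ∫ ω, (inner ℝ (V ω - mV) b : ℝ) * (inner ℝ (V ω - mV) c : ℝ) ∂μ = inner ℝ (CV b) c :=
    fun b c => aux_cov_pairing _ _ hVm hVm b c _ (hCV b)
  have hQeq : ∀ g : G, CV (Q g) = CVU g := fun g =>
    congrFun (congrArg (fun (f : G →L[ℝ] H) => ⇑f) hQcomp) g
  -- Claim A : components of W are uncorrelated with components of V - mV
  have claimA : ∀ (g : G) (c : H),
      ∫ ω, (inner ℝ ((U ω - mU) - Qa (V ω - mV)) g : ℝ) * (inner ℝ (V ω - mV) c : ℝ) ∂μ = 0 := by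
    intro g c
    have e : ∀ ω, (inner ℝ ((U ω - mU) - Qa (V ω - mV)) g : ℝ) * (inner ℝ (V ω - mV) c : ℝ) =
        (inner ℝ (U ω - mU) g : ℝ) * (inner ℝ (V ω - mV) c : ℝ)
          - (inner ℝ (V ω - mV) (Q g) : ℝ) * (inner ℝ (V ω - mV) c : ℝ) := by
      intro ω
      rw [inner_sub_left, ContinuousLinearMap.adjoint_inner_left]
      ring
    simp only [e]
    rw [integral_sub
      (aux_integrable_mul (aux_memLp_inner_const hUm g) (aux_memLp_inner_const hVm c))
      (aux_integrable_mul (aux_memLp_inner_const hVm (Q g)) (aux_memLp_inner_const hVm c))]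
    rw [hcovU, hcovV, hQeq, sub_self]
  -- Claim B : W is orthogonal to A (V - mV) for any bounded operator A
  have claimB : ∀ A : H →L[ℝ] G,
      ∫ ω, (inner ℝ ((U ω - mU) - Qa (V ω - mV)) (A (V ω - mV)) : ℝ) ∂μ = 0 := by
    intro A
    have hXA : MemLp
        (fun ω => (ContinuousLinearMap.adjoint A) ((U ω - mU) - Qa (V ω - mV))) 2 μ := by
      simpa [Function.comp_def] using (ContinuousLinearMap.adjoint A).comp_memLp' hWm
    have hkey := aux_key hXA hVm ?_
    · refine Eq.trans ?_ hkey
      refine integral_congr_ae (Filter.Eventually.of_forall fun ω => ?_)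
      simp only [ContinuousLinearMap.adjoint_inner_left]
    · intro a c
      have e : ∀ ω,
          (inner ℝ ((ContinuousLinearMap.adjoint A) ((U ω - mU) - Qa (V ω - mV))) a : ℝ) *
            (inner ℝ (V ω - mV) c : ℝ) =
          (inner ℝ ((U ω - mU) - Qa (V ω - mV)) (A a) : ℝ) * (inner ℝ (V ω - mV) c : ℝ) := by
        intro ω
        rw [ContinuousLinearMap.adjoint_inner_left]
      simp only [e]
      exact claimA (A a) c
  -- Claim C : W has zero mean against constants
  have claimC : ∀ c : G,
      ∫ ω, (inner ℝ ((U ω - mU) - Qa (V ω - mV)) c : ℝ) ∂μ = 0 := by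
    intro c
    have h2 := integral_inner (𝕜 := ℝ) hWInt c
    have e : ∀ ω, (inner ℝ ((U ω - mU) - Qa (V ω - mV)) c : ℝ) =
        (inner ℝ c ((U ω - mU) - Qa (V ω - mV)) : ℝ) := fun ω => real_inner_comm _ _
    simp only [e]
    rw [h2, hWZero, inner_zero_right]
  constructor
  · -- membership in the closure
    refine subset_closure ⟨mU - Qa mV, Qa, ?_⟩
    filter_upwards [hUA] with ω h
    rw [h, map_sub]
    abel
  · -- orthogonality
    intro s hs
    have hcl : IsClosed {s : Lp G 2 μ | @inner ℝ _ _ (U - UA) s = (0 : ℝ)} :=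
      isClosed_eq (Continuous.inner continuous_const continuous_id) continuous_const
    refine closure_minimal ?_ hcl hs
    rintro s' ⟨bb, A, hs'⟩
    show @inner ℝ _ _ (U - UA) s' = (0 : ℝ)
    rw [L2.inner_def]
    have e1 : (fun ω => (inner ℝ ((U - UA : Lp G 2 μ) ω) (s' ω) : ℝ)) =ᵐ[μ]
        fun ω => (inner ℝ ((U ω - mU) - Qa (V ω - mV)) (bb + A mV) : ℝ) +
          (inner ℝ ((ContinuousLinearMap.adjoint A) ((U ω - mU) - Qa (V ω - mV)))
            (V ω - mV) : ℝ) := by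
      filter_upwards [Lp.coeFn_sub U UA, hUA, hs'] with ω h1 h2 h3
      rw [h1, Pi.sub_apply, h2, h3]
      have hv : bb + A (V ω) = (bb + A mV) + A (V ω - mV) := by
        rw [map_sub]; abel
      have hw : U ω - (mU + Qa (V ω - mV)) = (U ω - mU) - Qa (V ω - mV) := by
        abel
      rw [hv, hw, inner_add_right, ContinuousLinearMap.adjoint_inner_left]
    rw [integral_congr_ae e1]
    have int3 : Integrable
        (fun ω => (inner ℝ ((U ω - mU) - Qa (V ω - mV)) (bb + A mV) : ℝ)) μ :=
      (aux_memLp_inner_const hWm (bb + A mV)).integrable one_le_two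
    have int4 : Integrable (fun ω =>
        (inner ℝ ((ContinuousLinearMap.adjoint A) ((U ω - mU) - Qa (V ω - mV)))
          (V ω - mV) : ℝ)) μ := by
      refine aux_integrable_inner ?_ hVm
      simpa [Function.comp_def] using (ContinuousLinearMap.adjoint A).comp_memLp' hWm
    rw [integral_add int3 int4]
    have hB := claimB A
    have e2 : ∫ ω, (inner ℝ ((ContinuousLinearMap.adjoint A) ((U ω - mU) - Qa (V ω - mV)))
        (V ω - mV) : ℝ) ∂μ = 0 := by
      refine Eq.trans ?_ hB
      refine integral_congr_ae (Filter.Eventually.of_forall fun ω => ?_)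
      simp only [ContinuousLinearMap.adjoint_inner_left]
    rw [claimC, e2, add_zero]

end
end

section
/- If the covariance operator C_V has closed range (in particular, if H is finite-dimensional), then ran C_{VU} ⊆ ran C_V. -/
open MeasureTheory
open scoped ENNReal

noncomputable section

variable {Ω : Type*} [MeasurableSpace Ω]

/-- If the covariance operator `C_V` has closed range (in particular, if `H`
is finite-dimensional), then `ran C_{VU} ⊆ ran C_V`. -/
theorem range_crossCov_subset_range_cov_of_closedRange
    (μ : Measure Ω) [IsProbabilityMeasure μ]
    {G H : Type*}
    [NormedAddCommGroup G] [InnerProductSpace ℝ G] [CompleteSpace G] [SecondCountableTopology G]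
    [NormedAddCommGroup H] [InnerProductSpace ℝ H] [CompleteSpace H] [SecondCountableTopology H]
    (U : Lp G 2 μ) (V : Lp H 2 μ)
    (CV : H →L[ℝ] H) (CVU : G →L[ℝ] H)
    (hCV : ∀ h : H, CV h =
      ∫ ω, (@inner ℝ _ _ (V ω - ∫ ω', V ω' ∂μ) h) • (V ω - ∫ ω', V ω' ∂μ) ∂μ)
    (hCVU : ∀ g : G, CVU g =
      ∫ ω, (@inner ℝ _ _ (U ω - ∫ ω', U ω' ∂μ) g) • (V ω - ∫ ω', V ω' ∂μ) ∂μ)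
    (hclosed : IsClosed (Set.range CV)) :
    Set.range CVU ⊆ Set.range CV := by
  set mV : H := ∫ ω', V ω' ∂μ with hmV
  set mU : G := ∫ ω', U ω' ∂μ with hmU
  set v : Ω → H := fun ω => V ω - mV with hvdef
  set u : Ω → G := fun ω => U ω - mU with hudef
  have hv : MemLp v 2 μ := (Lp.memLp V).sub (memLp_const mV)
  have hu : MemLp u 2 μ := (Lp.memLp U).sub (memLp_const mU)
  -- scalar functions in L²
  have hvh : ∀ x : H, MemLp (fun ω => (@inner ℝ _ _ (v ω) x)) 2 μ := fun x => by
    have h1 : MemLp (fun ω => (@inner ℝ _ _ x (v ω))) 2 μ := hv.const_inner x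
    rw [show (fun ω => (@inner ℝ _ _ (v ω) x)) = fun ω => (@inner ℝ _ _ x (v ω)) from
      funext fun ω => real_inner_comm _ _]
    exact h1
  have hug : ∀ g : G, MemLp (fun ω => (@inner ℝ _ _ (u ω) g)) 2 μ := fun g => by
    have h1 : MemLp (fun ω => (@inner ℝ _ _ g (u ω))) 2 μ := hu.const_inner g
    rw [show (fun ω => (@inner ℝ _ _ (u ω) g)) = fun ω => (@inner ℝ _ _ g (u ω)) from
      funext fun ω => real_inner_comm _ _]
    exact h1
  have h12 : (1 : ℝ≥0∞) / 1 = 1 / 2 + 1 / 2 := by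
    rw [one_div_one, one_div, ENNReal.inv_two_add_inv_two]
  -- integrability of the vector integrands
  have hintV : ∀ x : H, Integrable (fun ω => (@inner ℝ _ _ (v ω) x) • v ω) μ := fun x => by
    have := (hv.smul (hvh x) : MemLp ((fun ω => (@inner ℝ _ _ (v ω) x)) • v) 1 μ)
    rw [memLp_one_iff_integrable] at this
    exact this
  have hintU : ∀ g : G, Integrable (fun ω => (@inner ℝ _ _ (u ω) g) • v ω) μ := fun g => by
    have := (hv.smul (hug g) : MemLp ((fun ω => (@inner ℝ _ _ (u ω) g)) • v) 1 μ)
    rw [memLp_one_iff_integrable] at this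
    exact this
  -- key: if ⟪x, CV x⟫ = 0 then ⟪v ω, x⟫ = 0 a.e.
  have hker : ∀ x : H, (@inner ℝ _ _ x (CV x)) = 0 →
      (fun ω => (@inner ℝ _ _ (v ω) x)) =ᵐ[μ] 0 := by
    intro x hx
    have h2 : (@inner ℝ _ _ x (CV x)) = ∫ ω, (@inner ℝ _ _ (v ω) x) ^ 2 ∂μ := by
      rw [hCV x, ← integral_inner (hintV x) x]
      congr 1; ext ω
      rw [real_inner_smul_right, real_inner_comm x (v ω)]
      ring
    have h1 : ∫ ω, (@inner ℝ _ _ (v ω) x) ^ 2 ∂μ = 0 := by rw [← h2, hx]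
    have hnn : 0 ≤ᵐ[μ] fun ω => (@inner ℝ _ _ (v ω) x) ^ 2 :=
      Filter.Eventually.of_forall fun ω => sq_nonneg _
    have hint : Integrable (fun ω => (@inner ℝ _ _ (v ω) x) ^ 2) μ := by
      have := ((hvh x).smul (hvh x) :
        MemLp ((fun ω => (@inner ℝ _ _ (v ω) x)) • fun ω => (@inner ℝ _ _ (v ω) x)) 1 μ)
      rw [memLp_one_iff_integrable] at this
      simpa [Pi.smul_apply, smul_eq_mul, sq, Pi.mul_def] using this
    have h0 := (integral_eq_zero_iff_of_nonneg_ae hnn hint).mp h1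
    filter_upwards [h0] with ω hω
    exact pow_eq_zero_iff (n := 2) (by norm_num) |>.mp hω
  intro y hy
  obtain ⟨g, rfl⟩ := hy
  set K : Submodule ℝ H := LinearMap.range (CV : H →ₗ[ℝ] H) with hK
  have hKrange : (K : Set H) = Set.range CV := by
    ext z; simp [hK, LinearMap.mem_range]
  have hKclosed : IsClosed (K : Set H) := by rw [hKrange]; exact hclosed
  have hKcc : Kᗮᗮ = K := by
    rw [Submodule.orthogonal_orthogonal_eq_closure]
    exact SetLike.coe_injective (by rw [Submodule.topologicalClosure_coe, hKclosed.closure_eq])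
  have hmem : CVU g ∈ Kᗮᗮ := by
    rw [Submodule.mem_orthogonal]
    intro x hx
    have hxCV : (@inner ℝ _ _ x (CV x)) = 0 := by
      have : CV x ∈ K := ⟨x, rfl⟩
      have := (Submodule.mem_orthogonal K x).mp hx (CV x) this
      rwa [real_inner_comm] at this
    have hae := hker x hxCV
    rw [hCVU g, ← integral_inner (hintU g) x]
    have : (fun ω => (@inner ℝ _ _ x ((@inner ℝ _ _ (u ω) g) • v ω))) =ᵐ[μ] 0 := by
      filter_upwards [hae] with ω hω
      have hω' : (@inner ℝ _ _ x ((V : Ω → H) ω - mV)) = 0 := by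
        rw [real_inner_comm]; exact hω
      rw [real_inner_smul_right]
      simp [hω']
      exact Or.inr hω'
    rw [integral_congr_ae this]
    simp
  rw [← hKrange, ← hKcc]
  exact hmem
end
end

section
/- Explicit formula for the average linear conditional covariance: Cov_V^A[U,W] = C_{UW} − M_{VU}* M_{VW}, where M_{VU} := (C_V^{1/2})† C_{VU}; in particular, in the compatible case ran C_{VW} ⊆ ran C_V, Cov_V^A[U,W] = C_{UW} − C_{UV} C_V† C_{VW}. -/
open MeasureTheory

noncomputable section

variable {Ω : Type*} [MeasurableSpace Ω]

set_option linter.unusedSectionVars false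
section Helpers
variable (μ : Measure Ω) [IsProbabilityMeasure μ]
  {H G F : Type*} [NormedAddCommGroup H] [InnerProductSpace ℝ H] [CompleteSpace H]
  [NormedAddCommGroup G] [InnerProductSpace ℝ G] [CompleteSpace G]
  [NormedAddCommGroup F] [InnerProductSpace ℝ F] [CompleteSpace F]
  (V : Lp H 2 μ)

local notation "⟪" x ", " y "⟫" => @inner ℝ _ _ x y

lemma const_mem_affSet (b : G) : (Lp.const 2 μ b : Lp G 2 μ) ∈ affSet μ V := by
  refine ⟨b, 0, ?_⟩
  filter_upwards [Lp.coeFn_const 2 μ b] with ω h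
  simp [h, Function.const]

lemma affine_mem_affSet (c : G) (B : H →L[ℝ] G) :
    (Lp.const 2 μ c + B.compLp V : Lp G 2 μ) ∈ affSet μ V := by
  refine ⟨c, B, ?_⟩
  filter_upwards [Lp.coeFn_add (Lp.const 2 μ c) (B.compLp V), Lp.coeFn_const 2 μ c,
    B.coeFn_compLp V] with ω h1 h2 h3
  rw [h1, Pi.add_apply, h2, h3]; rfl

lemma comp_const_add_mem_closure (A : G →L[ℝ] F) (c : F) {s : Lp G 2 μ}
    (hs : s ∈ closure (affSet μ V)) :
    (Lp.const 2 μ c + A.compLp s : Lp F 2 μ) ∈ closure (affSet μ V) := by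
  have hT : Continuous (fun x : Lp G 2 μ => Lp.const 2 μ c + (A.compLpL 2 μ) x) :=
    continuous_const.add (A.compLpL 2 μ).continuous
  have hmap : Set.MapsTo (fun x : Lp G 2 μ => Lp.const 2 μ c + (A.compLpL 2 μ) x)
      (affSet μ V) (affSet μ V) := by
    rintro x ⟨b, B, hx⟩
    refine ⟨c + A b, A.comp B, ?_⟩
    filter_upwards [Lp.coeFn_add (Lp.const 2 μ c) ((A.compLpL 2 μ) x),
      Lp.coeFn_const 2 μ c, A.coeFn_compLpL x, hx] with ω h1 h2 h3 h4
    rw [h1, Pi.add_apply, h2, h3, h4]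
    simp [add_assoc]
  have := map_mem_closure hT hs hmap
  exact this

lemma orth_integral {U UA : Lp G 2 μ} (hUA : IsLCE μ U UA V) {s : Lp G 2 μ}
    (hs : s ∈ closure (affSet μ V)) : ∫ ω, ⟪U ω - UA ω, s ω⟫ ∂μ = 0 := by
  have h := hUA.2 s hs
  rw [L2.inner_def] at h
  rw [← h]
  refine integral_congr_ae ?_
  filter_upwards [Lp.coeFn_sub U UA] with ω hω
  rw [hω]; rfl

lemma mean_sub_eq_zero {U UA : Lp G 2 μ} (hUA : IsLCE μ U UA V) :
    ∫ ω, (U ω - UA ω) ∂μ = 0 := by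
  refine integral_eq_zero_of_forall_integral_inner_eq_zero ℝ _ ?_ ?_
  · exact ((Lp.memLp U).integrable one_le_two).sub ((Lp.memLp UA).integrable one_le_two)
  · intro c
    have h := orth_integral μ V hUA (subset_closure (const_mem_affSet μ V c))
    rw [← h]
    refine integral_congr_ae ?_
    filter_upwards [Lp.coeFn_const 2 μ c] with ω hω
    rw [hω, real_inner_comm]; rfl

lemma mean_eq {U UA : Lp G 2 μ} (hUA : IsLCE μ U UA V) :
    ∫ ω, UA ω ∂μ = ∫ ω, U ω ∂μ := by
  have h := mean_sub_eq_zero μ V hUA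
  rw [integral_sub ((Lp.memLp U).integrable one_le_two)
    ((Lp.memLp UA).integrable one_le_two), sub_eq_zero] at h
  exact h.symm


lemma memℒp_inner_sub (X : Lp G 2 μ) (c e : G) : MemLp (fun ω => ⟪X ω - c, e⟫) 2 μ :=
  ((Lp.memLp X).sub (memLp_const c)).inner_const e

lemma integrable_mul2 {φ ψ : Ω → ℝ} (hφ : MemLp φ 2 μ) (hψ : MemLp ψ 2 μ) :
    Integrable (fun ω => φ ω * ψ ω) μ := by
  have h := hψ.smul hφ (r := 1)
  exact memLp_one_iff_integrable.mp h

lemma integrable_smul2 {φ : Ω → ℝ} {X : Ω → G} (hφ : MemLp φ 2 μ) (hX : MemLp X 2 μ) :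
    Integrable (fun ω => φ ω • X ω) μ := by
  have h := hX.smul hφ (r := 1)
  exact memLp_one_iff_integrable.mp h

lemma integral_inner_left {X : Ω → G} (hX : Integrable X μ) (x : G) :
    ∫ ω, ⟪X ω, x⟫ ∂μ = ⟪∫ ω, X ω ∂μ, x⟫ := by
  rw [real_inner_comm, ← integral_inner hX x]
  exact integral_congr_ae (Filter.Eventually.of_forall fun ω => real_inner_comm _ _)

lemma integral_inner_center_zero (X : Lp G 2 μ) (e : G) :
    ∫ ω, ⟪X ω - (∫ ω', X ω' ∂μ), e⟫ ∂μ = 0 := by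
  have hX : Integrable (fun ω => X ω) μ := (Lp.memLp X).integrable one_le_two
  have hXc : Integrable (fun ω => X ω - (∫ ω', X ω' ∂μ)) μ := hX.sub (integrable_const _)
  rw [integral_inner_left μ hXc e]
  have : ∫ ω, (X ω - (∫ ω', X ω' ∂μ)) ∂μ = 0 := by
    rw [integral_sub hX (integrable_const _), integral_const]
    simp
  rw [this, inner_zero_left]

lemma pair_integral (X : Lp G 2 μ) (Y : Lp F 2 μ) (cX : G) (cY : F) (e : F) (x : G) :
    ⟪∫ ω, ⟪Y ω - cY, e⟫ • (X ω - cX) ∂μ, x⟫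
      = ∫ ω, ⟪Y ω - cY, e⟫ * ⟪X ω - cX, x⟫ ∂μ := by
  have hint : Integrable (fun ω => ⟪Y ω - cY, e⟫ • (X ω - cX)) μ :=
    integrable_smul2 μ (memℒp_inner_sub μ Y cY e) ((Lp.memLp X).sub (memLp_const cX))
  rw [← integral_inner_left μ hint x]
  exact integral_congr_ae (Filter.Eventually.of_forall fun ω => real_inner_smul_left _ _ _)

lemma sq_integral_norm (s : Lp F 2 μ) (m : F) :
    ∫ ω, ‖s ω - m‖ ^ 2 ∂μ = ‖s - Lp.const 2 μ m‖ ^ 2 := by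
  rw [← real_inner_self_eq_norm_sq, L2.inner_def]
  refine (integral_congr_ae ?_).symm
  filter_upwards [Lp.coeFn_sub s (Lp.const 2 μ m), Lp.coeFn_const 2 μ m] with ω h1 h2
  rw [h1, Pi.sub_apply, h2, real_inner_self_eq_norm_sq]; rfl

lemma range_S_mem_orth (S : H →L[ℝ] H) (hsa : ∀ x y : H, ⟪S x, y⟫ = ⟪x, S y⟫) (z : H) :
    S z ∈ (LinearMap.ker (S : H →ₗ[ℝ] H))ᗮ := by
  rw [Submodule.mem_orthogonal]
  intro u hu
  have hu' : S u = 0 := hu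
  rw [real_inner_comm, hsa, hu', inner_zero_right]

lemma eq_of_S_inj (S : H →L[ℝ] H) {x y : H} (hSxy : S x = S y)
    (hx : x ∈ (LinearMap.ker (S : H →ₗ[ℝ] H))ᗮ) (hy : y ∈ (LinearMap.ker (S : H →ₗ[ℝ] H))ᗮ) : x = y := by
  have hd : x - y ∈ (LinearMap.ker (S : H →ₗ[ℝ] H))ᗮ := Submodule.sub_mem _ hx hy
  have hker : x - y ∈ LinearMap.ker (S : H →ₗ[ℝ] H) := by
    have : S (x - y) = 0 := by rw [map_sub, hSxy, sub_self]
    exact this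
  have := (Submodule.mem_orthogonal _ _).mp hd _ hker
  exact sub_eq_zero.mp (inner_self_eq_zero.mp this)

lemma mem_closure_range_S (S : H →L[ℝ] H) (hsa : ∀ x y : H, ⟪S x, y⟫ = ⟪x, S y⟫)
    {x : H} (hx : x ∈ (LinearMap.ker (S : H →ₗ[ℝ] H))ᗮ) : x ∈ closure (Set.range S) := by
  have hker : (LinearMap.ker (S : H →ₗ[ℝ] H) : Submodule ℝ H) = (LinearMap.range (S : H →ₗ[ℝ] H))ᗮ := by
    ext z
    constructor
    · intro hz
      rw [Submodule.mem_orthogonal]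
      rintro u ⟨y, rfl⟩
      have hz' : S z = 0 := hz
      change ⟪S y, z⟫ = 0
      rw [hsa, hz', inner_zero_right]
    · intro hz
      have h1 : ⟪S z, S z⟫ = 0 := by
        rw [hsa, real_inner_comm]
        exact (Submodule.mem_orthogonal _ _).mp hz _ ⟨S z, rfl⟩
      exact inner_self_eq_zero.mp h1
  rw [hker, Submodule.orthogonal_orthogonal_eq_closure] at hx
  rw [← SetLike.mem_coe, Submodule.topologicalClosure_coe, LinearMap.coe_range,
    ContinuousLinearMap.coe_coe] at hx
  exact hx

lemma norm_integral_le_Lp (X : Lp G 2 μ) : ‖∫ ω, X ω ∂μ‖ ≤ ‖X‖ := by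
  have h1 : ‖∫ ω, X ω ∂μ‖ ≤ ∫ ω, ‖X ω‖ ∂μ := norm_integral_le_integral_norm _
  refine h1.trans ?_
  set n : Lp ℝ 2 μ := ((Lp.memLp X).norm).toLp _
  have hn : (n : Ω → ℝ) =ᵐ[μ] fun ω => ‖X ω‖ := MemLp.coeFn_toLp _
  have h2 : ∫ ω, ‖X ω‖ ∂μ = ⟪n, Lp.const 2 μ (1:ℝ)⟫ := by
    rw [L2.inner_def]
    refine integral_congr_ae ?_
    filter_upwards [hn, Lp.coeFn_const 2 μ (1:ℝ)] with ω h1 h2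
    simp [h1, h2, RCLike.inner_apply]
  have h3 : ‖n‖ = ‖X‖ := by
    rw [Lp.norm_toLp, Lp.norm_def, eLpNorm_norm]
  have h4 : ‖(Lp.const 2 μ (1:ℝ))‖ = 1 := by
    rw [Lp.norm_const 2 μ (1:ℝ) (by norm_num)]
    simp
  calc ∫ ω, ‖X ω‖ ∂μ = ⟪n, Lp.const 2 μ (1:ℝ)⟫ := h2
    _ ≤ ‖n‖ * ‖Lp.const 2 μ (1:ℝ)‖ := real_inner_le_norm _ _
    _ = ‖X‖ := by rw [h3, h4, mul_one]

lemma ortho_prod {X XA : Lp G 2 μ} (hLCE : IsLCE μ X XA V) {s : Lp F 2 μ}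
    (hs : s ∈ closure (affSet μ V)) (g' : G) (f' : F) (r : ℝ) :
    ∫ ω, ⟪X ω - XA ω, g'⟫ * (⟪s ω, f'⟫ - r) ∂μ = 0 := by
  have hmem := comp_const_add_mem_closure μ V ((innerSL ℝ f').smulRight g') ((-r) • g') hs
  have key := orth_integral μ V hLCE hmem
  rw [← key]
  refine integral_congr_ae ?_
  filter_upwards [Lp.coeFn_add (Lp.const 2 μ ((-r) • g'))
      (((innerSL ℝ f').smulRight g').compLp s),
    Lp.coeFn_const 2 μ ((-r) • g'), ((innerSL ℝ f').smulRight g').coeFn_compLp s]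
    with ω h1 h2 h3
  rw [h1, Pi.add_apply, h2, h3]
  have hc : Function.const Ω ((-r) • g') ω = (-r) • g' := rfl
  rw [hc]
  simp only [ContinuousLinearMap.smulRight_apply, innerSL_apply_apply]
  rw [inner_add_right, real_inner_smul_right, real_inner_smul_right,
    real_inner_comm f' (s ω)]
  ring

lemma aff_pairing (X : Lp G 2 μ) (c : F) (B : H →L[ℝ] F) (f : F) (g : G) :
    ∫ ω, ⟪X ω - (∫ ω', X ω' ∂μ), g⟫ * ⟪c + B (V ω), f⟫ ∂μ
      = ⟪∫ ω, ⟪X ω - (∫ ω', X ω' ∂μ), g⟫ • (V ω - (∫ ω', V ω' ∂μ)) ∂μ,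
          (ContinuousLinearMap.adjoint B) f⟫ := by
  set mX := ∫ ω', X ω' ∂μ with hmX
  set mV := ∫ ω', V ω' ∂μ with hmV
  have hptw : ∀ ω, ⟪X ω - mX, g⟫ * ⟪c + B (V ω), f⟫
      = ⟪X ω - mX, g⟫ * ⟪V ω - mV, (ContinuousLinearMap.adjoint B) f⟫
        + ⟪X ω - mX, g⟫ * (⟪c, f⟫ + ⟪mV, (ContinuousLinearMap.adjoint B) f⟫) := by
    intro ω
    have h1 : ⟪c + B (V ω), f⟫ = ⟪c, f⟫ + ⟪V ω, (ContinuousLinearMap.adjoint B) f⟫ := by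
      rw [inner_add_left, ContinuousLinearMap.adjoint_inner_right]
    have h2 : ⟪V ω, (ContinuousLinearMap.adjoint B) f⟫
        = ⟪V ω - mV, (ContinuousLinearMap.adjoint B) f⟫
          + ⟪mV, (ContinuousLinearMap.adjoint B) f⟫ := by
      rw [inner_sub_left]; ring
    rw [h1, h2]; ring
  rw [integral_congr_ae (Filter.Eventually.of_forall hptw)]
  have hint2 : Integrable (fun ω =>
      ⟪X ω - mX, g⟫ * ⟪V ω - mV, (ContinuousLinearMap.adjoint B) f⟫) μ :=
    integrable_mul2 μ (memℒp_inner_sub μ X mX g)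
      (memℒp_inner_sub μ V mV ((ContinuousLinearMap.adjoint B) f))
  have hint1 : Integrable (fun ω => ⟪X ω - mX, g⟫) μ :=
    (memℒp_inner_sub μ X mX g).integrable one_le_two
  rw [integral_add hint2 (hint1.mul_const _), integral_mul_const, hmX,
    integral_inner_center_zero, zero_mul, add_zero,
    pair_integral μ V X mV mX g ((ContinuousLinearMap.adjoint B) f)]

lemma aff_norm_bound (S : H →L[ℝ] H)
    (hsa : ∀ x y : H, ⟪S x, y⟫ = ⟪x, S y⟫)
    (hCVint : ∀ h : H, S (S h)
      = ∫ ω, ⟪V ω - (∫ ω', V ω' ∂μ), h⟫ • (V ω - (∫ ω', V ω' ∂μ)) ∂μ)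
    (s : Lp F 2 μ) (c : F) (B : H →L[ℝ] F)
    (hs : (s : Ω → F) =ᵐ[μ] fun ω => c + B (V ω)) (f : F) :
    ‖S ((ContinuousLinearMap.adjoint B) f)‖ ≤ 2 * ‖f‖ * ‖s‖ := by
  set mV := ∫ ω', V ω' ∂μ with hmV
  set a := (ContinuousLinearMap.adjoint B) f with ha
  have hV : Integrable (fun ω => V ω) μ := (Lp.memLp V).integrable one_le_two
  have hm' : ∫ ω, s ω ∂μ = c + B mV := by
    rw [integral_congr_ae hs, integral_add (integrable_const c) (B.integrable_comp hV),
      integral_const, B.integral_comp_comm hV]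
    simp
    rfl
  set m' := ∫ ω, s ω ∂μ with hm'def
  have key : ∀ᵐ ω ∂μ, ⟪V ω - mV, a⟫ = ⟪s ω - m', f⟫ := by
    filter_upwards [hs] with ω hω
    rw [ha, ContinuousLinearMap.adjoint_inner_right, map_sub]
    congr 1
    rw [hω, hm']
    abel
  have hSa_sq : ‖S a‖ ^ 2 = ∫ ω, ⟪V ω - mV, a⟫ * ⟪V ω - mV, a⟫ ∂μ := by
    rw [← real_inner_self_eq_norm_sq]
    have h1 : ⟪S a, S a⟫ = ⟪S (S a), a⟫ := by rw [hsa, real_inner_comm]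
    rw [h1, hCVint a, pair_integral μ V V mV mV a a]
  have hint2' : Integrable (fun ω => ‖f‖ ^ 2 * ‖s ω - m'‖ ^ 2) μ := by
    have hn : MemLp (fun ω => ‖s ω - m'‖) 2 μ := ((Lp.memLp s).sub (memLp_const m')).norm
    exact hn.integrable_sq.const_mul _
  have hmono : ∫ ω, ⟪V ω - mV, a⟫ * ⟪V ω - mV, a⟫ ∂μ
      ≤ ∫ ω, ‖f‖ ^ 2 * ‖s ω - m'‖ ^ 2 ∂μ := by
    refine integral_mono_ae
      (integrable_mul2 μ (memℒp_inner_sub μ V mV a) (memℒp_inner_sub μ V mV a)) hint2' ?_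
    filter_upwards [key] with ω hω
    rw [hω]
    have h2 := real_inner_mul_inner_self_le (s ω - m') f
    rw [real_inner_self_eq_norm_sq, real_inner_self_eq_norm_sq] at h2
    nlinarith [h2]
  have hconst : ‖s - Lp.const 2 μ m'‖ ≤ 2 * ‖s‖ := by
    refine (norm_sub_le _ _).trans ?_
    have h4 : ‖((Lp.const 2 μ m') : Lp F 2 μ)‖ = ‖m'‖ := by
      rw [Lp.norm_const 2 μ m' (by norm_num)]
      simp
    have h5 := norm_integral_le_Lp μ s
    rw [h4]
    rw [hm'def]
    linarith
  have hbound : ‖S a‖ ^ 2 ≤ (2 * ‖f‖ * ‖s‖) ^ 2 := by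
    have h6 : ∫ ω, ‖f‖ ^ 2 * ‖s ω - m'‖ ^ 2 ∂μ = ‖f‖ ^ 2 * ‖s - Lp.const 2 μ m'‖ ^ 2 := by
      rw [integral_const_mul, sq_integral_norm]
    have h9 : ‖s - Lp.const 2 μ m'‖ ^ 2 ≤ (2 * ‖s‖) ^ 2 := by
      nlinarith [hconst, norm_nonneg (s - Lp.const 2 μ m'), norm_nonneg s]
    have h7 : ‖f‖ ^ 2 * ‖s - Lp.const 2 μ m'‖ ^ 2 ≤ (2 * ‖f‖ * ‖s‖) ^ 2 := by
      nlinarith [h9, sq_nonneg ‖f‖, norm_nonneg f, norm_nonneg s,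
        norm_nonneg (s - Lp.const 2 μ m')]
    rw [hSa_sq]
    calc ∫ ω, ⟪V ω - mV, a⟫ * ⟪V ω - mV, a⟫ ∂μ
        ≤ ∫ ω, ‖f‖ ^ 2 * ‖s ω - m'‖ ^ 2 ∂μ := hmono
      _ = ‖f‖ ^ 2 * ‖s - Lp.const 2 μ m'‖ ^ 2 := h6
      _ ≤ (2 * ‖f‖ * ‖s‖) ^ 2 := h7
  have h8 : (0:ℝ) ≤ 2 * ‖f‖ * ‖s‖ := by positivity
  nlinarith [norm_nonneg (S a), hbound, h8]

lemma eq_zero_of_forall_abs_le {C : ℝ} (hC : 0 ≤ C) (x : ℝ)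
    (h : ∀ ε > (0:ℝ), |x| ≤ ε * C) : x = 0 := by
  by_contra hne
  have hpos : 0 < |x| := abs_pos.mpr hne
  have hkey := h (|x| / (C + 1)) (by positivity)
  have hlt : |x| / (C + 1) * C < |x| := by
    rw [div_mul_eq_mul_div, div_lt_iff₀ (by linarith)]
    nlinarith
  linarith

lemma clm_inner_eval (X : Lp G 2 μ) (e : G) (mX : G) (s : Lp F 2 μ) (f : F) :
    ⟪((innerSL ℝ e).compLpL 2 μ) X - Lp.const 2 μ ((⟪e, mX⟫ : ℝ)),
      ((innerSL ℝ f).compLpL 2 μ) s⟫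
      = ∫ ω, ⟪X ω - mX, e⟫ * ⟪s ω, f⟫ ∂μ := by
  rw [L2.inner_def]
  refine integral_congr_ae ?_
  filter_upwards [Lp.coeFn_sub (((innerSL ℝ e).compLpL 2 μ) X)
      (Lp.const 2 μ ((⟪e, mX⟫ : ℝ))),
    (innerSL ℝ e).coeFn_compLpL X, Lp.coeFn_const 2 μ ((⟪e, mX⟫ : ℝ)),
    (innerSL ℝ f).coeFn_compLpL s] with ω h1 h2 h3 h4
  rw [h1, Pi.sub_apply, h2, h3, h4]
  have hc : Function.const Ω ((⟪e, mX⟫ : ℝ)) ω = (⟪e, mX⟫ : ℝ) := rfl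
  rw [hc]
  simp only [innerSL_apply_apply, RCLike.inner_apply, starRingEnd_apply, star_trivial]
  rw [inner_sub_left, real_inner_comm (X ω) e, real_inner_comm (s ω) f,
    real_inner_comm e mX]
  exact mul_comm _ _

lemma proj_pairing (U : Lp G 2 μ) (W WA : Lp F 2 μ) (hWA : IsLCE μ W WA V)
    (S : H →L[ℝ] H) (hsa : ∀ x y : H, ⟪S x, y⟫ = ⟪x, S y⟫)
    (hCVint : ∀ h : H, S (S h)
      = ∫ ω, ⟪V ω - (∫ ω', V ω' ∂μ), h⟫ • (V ω - (∫ ω', V ω' ∂μ)) ∂μ)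
    (MVU : G →L[ℝ] H) (MVW : F →L[ℝ] H)
    (hMVU1 : ∀ g : G, S (MVU g)
      = ∫ ω, ⟪U ω - (∫ ω', U ω' ∂μ), g⟫ • (V ω - (∫ ω', V ω' ∂μ)) ∂μ)
    (hMVU2 : ∀ g : G, MVU g ∈ (LinearMap.ker (S : H →ₗ[ℝ] H))ᗮ)
    (hMVW1 : ∀ f : F, S (MVW f)
      = ∫ ω, ⟪W ω - (∫ ω', W ω' ∂μ), f⟫ • (V ω - (∫ ω', V ω' ∂μ)) ∂μ)
    (f : F) (g : G) :
    ∫ ω, ⟪U ω - (∫ ω', U ω' ∂μ), g⟫ * ⟪WA ω - (∫ ω', W ω' ∂μ), f⟫ ∂μ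
      = ⟪MVW f, MVU g⟫ := by
  set mU := ∫ ω', U ω' ∂μ with hmU
  set mV := ∫ ω', V ω' ∂μ with hmV
  set mW := ∫ ω', W ω' ∂μ with hmW
  set xU : Lp ℝ 2 μ := ((innerSL ℝ g).compLpL 2 μ) U - Lp.const 2 μ ((⟪g, mU⟫ : ℝ)) with hxU
  set ef : Lp F 2 μ →L[ℝ] Lp ℝ 2 μ := (innerSL ℝ f).compLpL 2 μ with hef
  set ψ : Lp F 2 μ → ℝ := fun s => ⟪xU, ef s⟫ with hψdef
  have hψ_eval : ∀ s : Lp F 2 μ, ψ s = ∫ ω, ⟪U ω - mU, g⟫ * ⟪s ω, f⟫ ∂μ := fun s =>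
    clm_inner_eval μ U g mU s f
  have hψ_cont : Continuous ψ := Continuous.inner continuous_const ef.continuous
  set χ : H → Lp F 2 μ → ℝ := fun h s =>
    ⟪((innerSL ℝ h).compLpL 2 μ) V - Lp.const 2 μ ((⟪h, mV⟫ : ℝ)), ef s⟫ with hχdef
  have hχ_eval : ∀ (h : H) (s : Lp F 2 μ),
      χ h s = ∫ ω, ⟪V ω - mV, h⟫ * ⟪s ω, f⟫ ∂μ := fun h s =>
    clm_inner_eval μ V h mV s f
  have hχ_cont : ∀ h : H, Continuous (χ h) := fun h =>
    Continuous.inner continuous_const ef.continuous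
  -- bound on affine elements
  have hbnd : ∀ (h : H), ∀ s ∈ affSet μ V,
      |ψ s - χ h s| ≤ ‖MVU g - S h‖ * (2 * ‖f‖ * ‖s‖) := by
    rintro h s ⟨cs, B, hsrep⟩
    have hψs : ψ s = ⟪MVU g, S ((ContinuousLinearMap.adjoint B) f)⟫ := by
      rw [hψ_eval s]
      have : ∫ ω, ⟪U ω - mU, g⟫ * ⟪s ω, f⟫ ∂μ
          = ∫ ω, ⟪U ω - mU, g⟫ * ⟪cs + B (V ω), f⟫ ∂μ := by
        refine integral_congr_ae ?_
        filter_upwards [hsrep] with ω hω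
        rw [hω]
      rw [this, aff_pairing μ V U cs B f g, ← hmU, ← hmV, ← hMVU1 g, hsa]
    have hχs : χ h s = ⟪S h, S ((ContinuousLinearMap.adjoint B) f)⟫ := by
      rw [hχ_eval h s]
      have : ∫ ω, ⟪V ω - mV, h⟫ * ⟪s ω, f⟫ ∂μ
          = ∫ ω, ⟪V ω - mV, h⟫ * ⟪cs + B (V ω), f⟫ ∂μ := by
        refine integral_congr_ae ?_
        filter_upwards [hsrep] with ω hω
        rw [hω]
      rw [this, aff_pairing μ V V cs B f h, ← hmV, ← hCVint h, hsa]
    rw [hψs, hχs, ← inner_sub_left]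
    refine (abs_real_inner_le_norm _ _).trans ?_
    refine mul_le_mul_of_nonneg_left ?_ (norm_nonneg _)
    exact aff_norm_bound μ V S hsa hCVint s cs B hsrep f
  -- pass to closure
  have hbnd' : ∀ h : H, |ψ WA - χ h WA| ≤ ‖MVU g - S h‖ * (2 * ‖f‖ * ‖WA‖) := by
    intro h
    have hclosed : IsClosed {s : Lp F 2 μ |
        |ψ s - χ h s| ≤ ‖MVU g - S h‖ * (2 * ‖f‖ * ‖s‖)} := by
      refine isClosed_le ?_ ?_
      · exact ((hψ_cont.sub (hχ_cont h)).abs)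
      · exact continuous_const.mul (continuous_const.mul continuous_norm)
    have hsub := closure_minimal (fun s hs => hbnd h s hs) hclosed
    exact hsub hWA.1
  -- evaluate χ h WA
  have hV_aff : (V : Lp H 2 μ) ∈ affSet μ V := by
    refine ⟨0, ContinuousLinearMap.id ℝ H, ?_⟩
    filter_upwards with ω
    simp
  have hχWA : ∀ h : H, χ h WA = ⟪MVW f, S h⟫ := by
    intro h
    have h0 := ortho_prod μ V hWA (subset_closure hV_aff) f h (⟪mV, h⟫ : ℝ)
    have h0' : ∫ ω, ⟪V ω - mV, h⟫ * ⟪W ω - WA ω, f⟫ ∂μ = 0 := by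
      rw [← h0]
      refine integral_congr_ae (Filter.Eventually.of_forall fun ω => ?_)
      dsimp only
      simp only [inner_sub_left]
      ring
    have hsplit : ∫ ω, ⟪V ω - mV, h⟫ * ⟪WA ω, f⟫ ∂μ
        = ∫ ω, ⟪V ω - mV, h⟫ * ⟪W ω, f⟫ ∂μ
          - ∫ ω, ⟪V ω - mV, h⟫ * ⟪W ω - WA ω, f⟫ ∂μ := by
      rw [← integral_sub]
      · refine integral_congr_ae (Filter.Eventually.of_forall fun ω => ?_)
        dsimp only
        simp only [inner_sub_left]
        ring
      · exact integrable_mul2 μ (memℒp_inner_sub μ V mV h) ((Lp.memLp W).inner_const f)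
      · exact integrable_mul2 μ (memℒp_inner_sub μ V mV h)
          (((Lp.memLp W).sub (Lp.memLp WA)).inner_const f)
    have hsplit2 : ∫ ω, ⟪V ω - mV, h⟫ * ⟪W ω, f⟫ ∂μ
        = ∫ ω, ⟪V ω - mV, h⟫ * ⟪W ω - mW, f⟫ ∂μ
          + (∫ ω, ⟪V ω - mV, h⟫ ∂μ) * ⟪mW, f⟫ := by
      rw [← integral_mul_const, ← integral_add]
      · refine integral_congr_ae (Filter.Eventually.of_forall fun ω => ?_)
        dsimp only
        simp only [inner_sub_left]
        ring
      · exact integrable_mul2 μ (memℒp_inner_sub μ V mV h) (memℒp_inner_sub μ W mW f)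
      · exact ((memℒp_inner_sub μ V mV h).integrable one_le_two).mul_const _
    have hzero : ∫ ω, ⟪V ω - mV, h⟫ ∂μ = 0 := by
      rw [hmV]
      exact integral_inner_center_zero μ V h
    have hpair : ∫ ω, ⟪V ω - mV, h⟫ * ⟪W ω - mW, f⟫ ∂μ = ⟪MVW f, S h⟫ := by
      have : ∫ ω, ⟪V ω - mV, h⟫ * ⟪W ω - mW, f⟫ ∂μ
          = ∫ ω, ⟪W ω - mW, f⟫ * ⟪V ω - mV, h⟫ ∂μ :=
        integral_congr_ae (Filter.Eventually.of_forall fun ω => mul_comm _ _)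
      rw [this, ← pair_integral μ V W mV mW f h, ← hMVW1 f, hsa, real_inner_comm]
    rw [hχ_eval h WA, hsplit, hsplit2, hzero, zero_mul, add_zero, h0', sub_zero, hpair]
  -- target in terms of ψ WA
  have htarget : ∫ ω, ⟪U ω - mU, g⟫ * ⟪WA ω - mW, f⟫ ∂μ = ψ WA := by
    rw [hψ_eval WA]
    have hsplit : ∫ ω, ⟪U ω - mU, g⟫ * ⟪WA ω, f⟫ ∂μ
        = ∫ ω, ⟪U ω - mU, g⟫ * ⟪WA ω - mW, f⟫ ∂μ
          + (∫ ω, ⟪U ω - mU, g⟫ ∂μ) * ⟪mW, f⟫ := by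
      rw [← integral_mul_const, ← integral_add]
      · refine integral_congr_ae (Filter.Eventually.of_forall fun ω => ?_)
        dsimp only
        simp only [inner_sub_left]
        ring
      · exact integrable_mul2 μ (memℒp_inner_sub μ U mU g) (memℒp_inner_sub μ WA mW f)
      · exact ((memℒp_inner_sub μ U mU g).integrable one_le_two).mul_const _
    have hzero : ∫ ω, ⟪U ω - mU, g⟫ ∂μ = 0 := by
      rw [hmU]
      exact integral_inner_center_zero μ U g
    rw [hsplit, hzero, zero_mul, add_zero]
  rw [htarget]
  -- epsilon argument
  have hclos : MVU g ∈ closure (Set.range S) := mem_closure_range_S S hsa (hMVU2 g)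
  set C : ℝ := 2 * ‖f‖ * ‖WA‖ + ‖MVW f‖ with hC
  have hCnn : 0 ≤ C := by positivity
  have hkey : ∀ ε > (0:ℝ), |ψ WA - ⟪MVW f, MVU g⟫| ≤ ε * C := by
    intro ε hε
    obtain ⟨b, ⟨h, rfl⟩, hdist⟩ := Metric.mem_closure_iff.mp hclos ε hε
    have hd : ‖MVU g - S h‖ < ε := by
      rwa [dist_eq_norm] at hdist
    have h1 := hbnd' h
    have h2 : |χ h WA - ⟪MVW f, MVU g⟫| ≤ ‖MVU g - S h‖ * ‖MVW f‖ := by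
      rw [hχWA h, ← inner_sub_right]
      refine (abs_real_inner_le_norm _ _).trans ?_
      rw [mul_comm (‖MVU g - S h‖) (‖MVW f‖), norm_sub_rev (S h) (MVU g)]
    calc |ψ WA - ⟪MVW f, MVU g⟫|
        ≤ |ψ WA - χ h WA| + |χ h WA - ⟪MVW f, MVU g⟫| := by
          have := abs_sub_abs_le_abs_sub (ψ WA - χ h WA) 0
          calc |ψ WA - ⟪MVW f, MVU g⟫|
              = |(ψ WA - χ h WA) + (χ h WA - ⟪MVW f, MVU g⟫)| := by ring_nf
            _ ≤ _ := abs_add_le _ _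
      _ ≤ ‖MVU g - S h‖ * (2 * ‖f‖ * ‖WA‖) + ‖MVU g - S h‖ * ‖MVW f‖ := by
          exact add_le_add h1 h2
      _ = ‖MVU g - S h‖ * C := by rw [hC]; ring
      _ ≤ ε * C := mul_le_mul_of_nonneg_right hd.le hCnn
  have hfinal := eq_zero_of_forall_abs_le hCnn (ψ WA - ⟪MVW f, MVU g⟫) hkey
  linarith [hfinal]

lemma core_identity (U UA : Lp G 2 μ) (W WA : Lp F 2 μ)
    (hUA : IsLCE μ U UA V) (hWA : IsLCE μ W WA V)
    (S : H →L[ℝ] H) (hsa : ∀ x y : H, ⟪S x, y⟫ = ⟪x, S y⟫)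
    (hCVint : ∀ h : H, S (S h)
      = ∫ ω, ⟪V ω - (∫ ω', V ω' ∂μ), h⟫ • (V ω - (∫ ω', V ω' ∂μ)) ∂μ)
    (MVU : G →L[ℝ] H) (MVW : F →L[ℝ] H)
    (hMVU1 : ∀ g : G, S (MVU g)
      = ∫ ω, ⟪U ω - (∫ ω', U ω' ∂μ), g⟫ • (V ω - (∫ ω', V ω' ∂μ)) ∂μ)
    (hMVU2 : ∀ g : G, MVU g ∈ (LinearMap.ker (S : H →ₗ[ℝ] H))ᗮ)
    (hMVW1 : ∀ f : F, S (MVW f)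
      = ∫ ω, ⟪W ω - (∫ ω', W ω' ∂μ), f⟫ • (V ω - (∫ ω', V ω' ∂μ)) ∂μ)
    (f : F) (g : G) :
    ∫ ω, ⟪U ω - UA ω, g⟫ * ⟪W ω - WA ω, f⟫ ∂μ
      = (∫ ω, ⟪W ω - (∫ ω', W ω' ∂μ), f⟫ * ⟪U ω - (∫ ω', U ω' ∂μ), g⟫ ∂μ)
        - ⟪MVW f, MVU g⟫ := by
  have hproj := proj_pairing μ V U W WA hWA S hsa hCVint MVU MVW hMVU1 hMVU2 hMVW1 f g
  set mU := ∫ ω', U ω' ∂μ with hmU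
  set mW := ∫ ω', W ω' ∂μ with hmW
  have hA := memℒp_inner_sub μ U mU g
  have hB := memℒp_inner_sub μ UA mU g
  have hC := memℒp_inner_sub μ W mW f
  have hD := memℒp_inner_sub μ WA mW f
  have iAC := integrable_mul2 μ hA hC
  have iAD := integrable_mul2 μ hA hD
  have iBC := integrable_mul2 μ hB hC
  have iBD := integrable_mul2 μ hB hD
  have hexp : ∫ ω, ⟪U ω - UA ω, g⟫ * ⟪W ω - WA ω, f⟫ ∂μ
      = ∫ ω, ((⟪U ω - mU, g⟫ * ⟪W ω - mW, f⟫ - ⟪U ω - mU, g⟫ * ⟪WA ω - mW, f⟫)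
          - (⟪UA ω - mU, g⟫ * ⟪W ω - mW, f⟫ - ⟪UA ω - mU, g⟫ * ⟪WA ω - mW, f⟫)) ∂μ := by
    refine integral_congr_ae (Filter.Eventually.of_forall fun ω => ?_)
    dsimp only
    simp only [inner_sub_left]
    ring
  have hd := ortho_prod μ V hWA hUA.1 f g (⟪mU, g⟫ : ℝ)
  have hd' : ∫ ω, ⟪UA ω - mU, g⟫ * ⟪W ω - mW, f⟫ ∂μ
      = ∫ ω, ⟪UA ω - mU, g⟫ * ⟪WA ω - mW, f⟫ ∂μ := by
    have h0 : ∫ ω, (⟪UA ω - mU, g⟫ * ⟪W ω - mW, f⟫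
        - ⟪UA ω - mU, g⟫ * ⟪WA ω - mW, f⟫) ∂μ = 0 := by
      refine Eq.trans (integral_congr_ae (Filter.Eventually.of_forall fun ω => ?_)) hd
      dsimp only
      simp only [inner_sub_left]
      ring
    rw [integral_sub iBC iBD] at h0
    linarith
  have hcomm : ∫ ω, ⟪U ω - mU, g⟫ * ⟪W ω - mW, f⟫ ∂μ
      = ∫ ω, ⟪W ω - mW, f⟫ * ⟪U ω - mU, g⟫ ∂μ :=
    integral_congr_ae (Filter.Eventually.of_forall fun ω => mul_comm _ _)
  have iACD : Integrable (fun ω => ⟪U ω - mU, g⟫ * ⟪W ω - mW, f⟫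
      - ⟪U ω - mU, g⟫ * ⟪WA ω - mW, f⟫) μ := iAC.sub iAD
  have iBCD : Integrable (fun ω => ⟪UA ω - mU, g⟫ * ⟪W ω - mW, f⟫
      - ⟪UA ω - mU, g⟫ * ⟪WA ω - mW, f⟫) μ := iBC.sub iBD
  have E1 : ∫ ω, ((⟪U ω - mU, g⟫ * ⟪W ω - mW, f⟫ - ⟪U ω - mU, g⟫ * ⟪WA ω - mW, f⟫)
          - (⟪UA ω - mU, g⟫ * ⟪W ω - mW, f⟫ - ⟪UA ω - mU, g⟫ * ⟪WA ω - mW, f⟫)) ∂μ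
      = (∫ ω, (⟪U ω - mU, g⟫ * ⟪W ω - mW, f⟫ - ⟪U ω - mU, g⟫ * ⟪WA ω - mW, f⟫) ∂μ)
        - ∫ ω, (⟪UA ω - mU, g⟫ * ⟪W ω - mW, f⟫ - ⟪UA ω - mU, g⟫ * ⟪WA ω - mW, f⟫) ∂μ :=
    integral_sub iACD iBCD
  have E2 : ∫ ω, (⟪U ω - mU, g⟫ * ⟪W ω - mW, f⟫ - ⟪U ω - mU, g⟫ * ⟪WA ω - mW, f⟫) ∂μ
      = (∫ ω, ⟪U ω - mU, g⟫ * ⟪W ω - mW, f⟫ ∂μ)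
        - ∫ ω, ⟪U ω - mU, g⟫ * ⟪WA ω - mW, f⟫ ∂μ := integral_sub iAC iAD
  have E3 : ∫ ω, (⟪UA ω - mU, g⟫ * ⟪W ω - mW, f⟫ - ⟪UA ω - mU, g⟫ * ⟪WA ω - mW, f⟫) ∂μ
      = (∫ ω, ⟪UA ω - mU, g⟫ * ⟪W ω - mW, f⟫ ∂μ)
        - ∫ ω, ⟪UA ω - mU, g⟫ * ⟪WA ω - mW, f⟫ ∂μ := integral_sub iBC iBD
  rw [hexp, E1, E2, E3]
  linarith [hd', hcomm, hproj]

end Helpers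

/-- Explicit formula for the average linear conditional covariance:
`Cov_V^A[U,W] = C_{UW} − M_{VU}* M_{VW}` where `M_{VU} = (C_V^{1/2})† C_{VU}`;
in particular, in the compatible case `ran C_{VW} ⊆ ran C_V`,
`Cov_V^A[U,W] = C_{UW} − C_{UV} C_V† C_{VW}` (with `C_{UV} = C_{VU}*`). -/
theorem alcc_explicit_formula
    (μ : Measure Ω) [IsProbabilityMeasure μ]
    {F G H : Type*}
    [NormedAddCommGroup F] [InnerProductSpace ℝ F] [CompleteSpace F] [SecondCountableTopology F]
    [NormedAddCommGroup G] [InnerProductSpace ℝ G] [CompleteSpace G] [SecondCountableTopology G]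
    [NormedAddCommGroup H] [InnerProductSpace ℝ H] [CompleteSpace H] [SecondCountableTopology H]
    (U UA : Lp G 2 μ) (W WA : Lp F 2 μ) (V : Lp H 2 μ)
    (hUA : IsLCE μ U UA V) (hWA : IsLCE μ W WA V)
    (CV : H →L[ℝ] H) (CVU : G →L[ℝ] H) (CVW : F →L[ℝ] H) (CUW : F →L[ℝ] G)
    (hCV : ∀ h : H, CV h =
      ∫ ω, (@inner ℝ _ _ (V ω - ∫ ω', V ω' ∂μ) h) • (V ω - ∫ ω', V ω' ∂μ) ∂μ)
    (hCVU : ∀ g : G, CVU g =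
      ∫ ω, (@inner ℝ _ _ (U ω - ∫ ω', U ω' ∂μ) g) • (V ω - ∫ ω', V ω' ∂μ) ∂μ)
    (hCVW : ∀ f : F, CVW f =
      ∫ ω, (@inner ℝ _ _ (W ω - ∫ ω', W ω' ∂μ) f) • (V ω - ∫ ω', V ω' ∂μ) ∂μ)
    (hCUW : ∀ f : F, CUW f =
      ∫ ω, (@inner ℝ _ _ (W ω - ∫ ω', W ω' ∂μ) f) • (U ω - ∫ ω', U ω' ∂μ) ∂μ)
    -- `S = C_V^{1/2}`: the (self-adjoint, nonnegative) square root of `C_V`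
    (S : H →L[ℝ] H)
    (hS_sa : ∀ x y : H, @inner ℝ _ _ (S x) y = @inner ℝ _ _ x (S y))
    (hS_pos : ∀ h : H, 0 ≤ @inner ℝ _ _ (S h) h)
    (hS_sq : S.comp S = CV)
    -- `M_{VU} = S† C_{VU}` and `M_{VW} = S† C_{VW}` (Douglas characterisation)
    (MVU : G →L[ℝ] H) (MVW : F →L[ℝ] H)
    (hMVU : S.comp MVU = CVU ∧ ∀ g : G, MVU g ∈ (LinearMap.ker (S : H →ₗ[ℝ] H))ᗮ)
    (hMVW : S.comp MVW = CVW ∧ ∀ f : F, MVW f ∈ (LinearMap.ker (S : H →ₗ[ℝ] H))ᗮ) :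
    (∀ f : F, cov μ (fun ω => U ω - UA ω) (fun ω => W ω - WA ω) f =
        CUW f - (ContinuousLinearMap.adjoint MVU) (MVW f)) ∧
    (Set.range CVW ⊆ Set.range CV →
      ∀ QW : F →L[ℝ] H,
        (CV.comp QW = CVW ∧ ∀ f : F, QW f ∈ (LinearMap.ker (CV : H →ₗ[ℝ] H))ᗮ) →
        ∀ f : F, cov μ (fun ω => U ω - UA ω) (fun ω => W ω - WA ω) f =
          CUW f - (ContinuousLinearMap.adjoint CVU) (QW f)) := by
  have hCVint : ∀ h : H, S (S h)
      = ∫ ω, (@inner ℝ _ _ (V ω - ∫ ω', V ω' ∂μ) h) • (V ω - ∫ ω', V ω' ∂μ) ∂μ := by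
    intro h
    rw [← hCV h, ← ContinuousLinearMap.comp_apply, hS_sq]
  have hMVU1 : ∀ g : G, S (MVU g)
      = ∫ ω, (@inner ℝ _ _ (U ω - ∫ ω', U ω' ∂μ) g) • (V ω - ∫ ω', V ω' ∂μ) ∂μ := by
    intro g
    rw [← hCVU g, ← ContinuousLinearMap.comp_apply, hMVU.1]
  have hMVW1 : ∀ f : F, S (MVW f)
      = ∫ ω, (@inner ℝ _ _ (W ω - ∫ ω', W ω' ∂μ) f) • (V ω - ∫ ω', V ω' ∂μ) ∂μ := by
    intro f
    rw [← hCVW f, ← ContinuousLinearMap.comp_apply, hMVW.1]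
  have hpart1 : ∀ f : F, cov μ (fun ω => U ω - UA ω) (fun ω => W ω - WA ω) f
      = CUW f - (ContinuousLinearMap.adjoint MVU) (MVW f) := by
    intro f
    have hmeanU : ∫ ω, (U ω - UA ω) ∂μ = 0 := mean_sub_eq_zero μ V hUA
    have hmeanW : ∫ ω, (W ω - WA ω) ∂μ = 0 := mean_sub_eq_zero μ V hWA
    have hint : Integrable (fun ω => (@inner ℝ _ _ (W ω - WA ω) f) • (U ω - UA ω)) μ :=
      integrable_smul2 μ (((Lp.memLp W).sub (Lp.memLp WA)).inner_const f)
        ((Lp.memLp U).sub (Lp.memLp UA))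
    refine ext_inner_left ℝ fun g => ?_
    have lhs_eq : @inner ℝ _ _ g (cov μ (fun ω => U ω - UA ω) (fun ω => W ω - WA ω) f)
        = ∫ ω, (@inner ℝ _ _ (U ω - UA ω) g) * (@inner ℝ _ _ (W ω - WA ω) f) ∂μ := by
      simp only [cov, hmeanU, hmeanW, sub_zero]
      rw [← integral_inner hint g]
      refine integral_congr_ae (Filter.Eventually.of_forall fun ω => ?_)
      dsimp only
      rw [real_inner_smul_right, real_inner_comm g (U ω - UA ω), mul_comm]
    rw [lhs_eq,
      core_identity μ V U UA W WA hUA hWA S hS_sa hCVint MVU MVW hMVU1 hMVU.2 hMVW1 f g,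
      inner_sub_right]
    congr 1
    · rw [real_inner_comm (CUW f) g, hCUW f,
        pair_integral μ U W (∫ ω', U ω' ∂μ) (∫ ω', W ω' ∂μ) f g]
    · rw [ContinuousLinearMap.adjoint_inner_right]
      exact real_inner_comm _ _
  refine ⟨hpart1, ?_⟩
  intro _ QW hQW f
  have h1 : S (QW f) = MVW f := by
    refine eq_of_S_inj S ?_ (range_S_mem_orth S hS_sa (QW f)) (hMVW.2 f)
    have e1 : S (S (QW f)) = CV (QW f) := by rw [← ContinuousLinearMap.comp_apply, hS_sq]
    have e2 : CV (QW f) = CVW f := by rw [← ContinuousLinearMap.comp_apply, hQW.1]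
    have e3 : S (MVW f) = CVW f := by rw [← ContinuousLinearMap.comp_apply, hMVW.1]
    rw [e1, e2, e3]
  have h2 : (ContinuousLinearMap.adjoint CVU) (QW f)
      = (ContinuousLinearMap.adjoint MVU) (MVW f) := by
    refine ext_inner_left ℝ fun g => ?_
    rw [ContinuousLinearMap.adjoint_inner_right, ContinuousLinearMap.adjoint_inner_right,
      ← hMVU.1, ContinuousLinearMap.comp_apply, hS_sa, h1]
  rw [hpart1 f, h2]

end
end
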